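/- arXiv:1009.2486 — 9 statements merged into one kernel-verified Lean document; each statement's English description precedes it below -/
import Mathlib

section
/- For every nonnegative integer n, the identity $\sum_{k=0}^n \binom{n}{k}\binom{n+k}{k}\frac{1}{k+1} = \sum_{k=0}^n \binom{n+k}{2k} C_k$ holds, where $C_k = \binom{2k}{k}/(k+1)$ is the k-th Catalan number. -/
theorem schroeder_two_forms (n : ℕ) :
    ∑ k ∈ Finset.range (n + 1),
        (n.choose k * (n + k).choose k : ℚ) / (k + 1) =
      ∑ k ∈ Finset.range (n + 1), ((n + k).choose (2 * k) * catalan k : ℚ) := by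
  refine Finset.sum_congr rfl fun k hk => ?_
  have hkn : k ≤ n := Nat.lt_succ_iff.mp (Finset.mem_range.mp hk)
  have h1 : (n + k).choose (2 * k) * (2 * k).choose k = (n + k).choose k * n.choose k := by
    have := Nat.choose_mul (n := n + k) (k := 2 * k) (s := k)
      (by omega)
    simpa [two_mul, Nat.add_sub_cancel] using this
  have h2 : ((k : ℚ) + 1) * (catalan k : ℚ) = (2 * k).choose k := by
    have := succ_mul_catalan_eq_centralBinom k
    have : ((k + 1) * catalan k : ℕ) = ((2 * k).choose k : ℕ) := by
      simpa [Nat.centralBinom] using this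
    exact_mod_cast congrArg (Nat.cast : ℕ → ℚ) this
  have hk1 : ((k : ℚ) + 1) ≠ 0 := by positivity
  rw [div_eq_iff hk1]; symm
  calc ((n + k).choose (2 * k) * catalan k : ℚ) * (k + 1)
      = ((n + k).choose (2 * k) : ℚ) * (((k : ℚ) + 1) * catalan k) := by ring
    _ = ((n + k).choose (2 * k) : ℚ) * ((2 * k).choose k : ℚ) := by rw [h2]
    _ = (n.choose k * (n + k).choose k : ℚ) := by
        rw [← Nat.cast_mul, h1]; push_cast; ring
end

section
/- For every nonnegative integer n and every x, $(-1)^n D_n(x) = D_n(-x-1)$, where $D_n(x) = \sum_{k=0}^n \binom{n}{k}\binom{n+k}{k} x^k$. -/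
open Finset

/-- The Delannoy polynomial `D_n(x)` evaluated at `x` in a commutative ring. -/
def delannoyPoly {R : Type*} [CommRing R] (n : ℕ) (x : R) : R :=
  ∑ k ∈ Finset.range (n + 1), (n.choose k * (n + k).choose k : R) * x ^ k

private lemma key_pt (n m k : ℕ) (hk : k ≤ m) :
    n.choose k * (n - k).choose (m - k) = n.choose m * m.choose k := by
  rcases le_or_gt m n with h | h
  · exact (Nat.choose_mul hk).symm
  · rw [Nat.choose_eq_zero_of_lt h, Nat.zero_mul]
    rcases le_or_gt k n with hkn | hkn
    · rw [Nat.choose_eq_zero_of_lt (show n - k < m - k by omega), Nat.mul_zero]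
    · rw [Nat.choose_eq_zero_of_lt hkn, Nat.zero_mul]

private lemma key (n m : ℕ) :
    ∑ k ∈ range (m + 1), n.choose k * n.choose k * (n - k).choose (m - k)
      = n.choose m * (n + m).choose m := by
  have hvdm : (n + m).choose m = ∑ k ∈ range (m + 1), n.choose k * m.choose k := by
    rw [Nat.add_choose_eq, Finset.Nat.sum_antidiagonal_eq_sum_range_succ_mk]
    refine Finset.sum_congr rfl fun k hk => ?_
    rw [Finset.mem_range] at hk
    simp only
    rw [Nat.choose_symm (by omega)]
  rw [hvdm, Finset.mul_sum]
  refine Finset.sum_congr rfl fun k hk => ?_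
  rw [Finset.mem_range] at hk
  calc n.choose k * n.choose k * (n - k).choose (m - k)
      = n.choose k * (n.choose k * (n - k).choose (m - k)) := by ring
    _ = n.choose k * (n.choose m * m.choose k) := by rw [key_pt n m k (by omega)]
    _ = n.choose m * (n.choose k * m.choose k) := by ring

private lemma delannoy_alt {R : Type*} [CommRing R] (n : ℕ) (x : R) :
    delannoyPoly n x
      = ∑ k ∈ range (n + 1), (n.choose k : R) ^ 2 * x ^ k * (x + 1) ^ (n - k) := by
  have expand : ∀ k ∈ range (n + 1),
      (n.choose k : R) ^ 2 * x ^ k * (x + 1) ^ (n - k)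
        = ∑ m ∈ Finset.Ico k (n + 1),
            ((n.choose k : R) ^ 2 * ((n - k).choose (m - k) : R)) * x ^ m := by
    intro k hk
    rw [Finset.mem_range] at hk
    rw [add_pow]
    rw [Finset.sum_Ico_eq_sum_range]
    have hlen : n + 1 - k = n - k + 1 := by omega
    rw [hlen, Finset.mul_sum]
    refine Finset.sum_congr rfl fun j hj => ?_
    rw [Finset.mem_range] at hj
    have : k + j - k = j := by omega
    rw [this, one_pow, pow_add]
    ring
  rw [Finset.sum_congr rfl expand]
  have swap := Finset.sum_Ico_Ico_comm 0 (n + 1)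
    (fun k m => ((n.choose k : R) ^ 2 * ((n - k).choose (m - k) : R)) * x ^ m)
  rw [Finset.range_eq_Ico (a := n+1), swap]
  simp only [← Finset.range_eq_Ico]
  unfold delannoyPoly
  refine Finset.sum_congr rfl fun m hm => ?_
  rw [← Finset.sum_mul]
  congr 1
  have : ((∑ k ∈ range (m + 1),
      n.choose k * n.choose k * (n - k).choose (m - k) : ℕ) : R)
      = ((n.choose m * (n + m).choose m : ℕ) : R) := by rw [key]
  push_cast at this
  rw [← this]

  refine Finset.sum_congr rfl fun k hk => ?_
  ring

theorem delannoyPoly_reflect {R : Type*} [CommRing R] (n : ℕ) (x : R) :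
    (-1) ^ n * delannoyPoly n x = delannoyPoly n (-x - 1) := by
  rw [delannoy_alt, delannoy_alt]
  have h1 : ∀ k ∈ range (n + 1),
      (n.choose k : R) ^ 2 * (-x - 1) ^ k * (-x - 1 + 1) ^ (n - k)
        = (-1) ^ n * ((n.choose k : R) ^ 2 * (x + 1) ^ k * x ^ (n - k)) := by
    intro k hk
    rw [Finset.mem_range] at hk
    have : (-x - 1 + 1) = -x := by ring
    rw [this]
    have h2 : (-x - 1 : R) = -(x + 1) := by ring
    have e1 : (-(x + 1) : R) ^ k = (-1) ^ k * (x + 1) ^ k := by rw [neg_pow]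
    have e2 : (-x : R) ^ (n - k) = (-1) ^ (n - k) * x ^ (n - k) := by rw [neg_pow]
    have hpow : (-1 : R) ^ k * (-1 : R) ^ (n - k) = (-1) ^ n := by
      rw [← pow_add]; congr 1; omega
    rw [h2, e1, e2]
    linear_combination ((n.choose k : R) ^ 2 * (x + 1) ^ k * x ^ (n - k)) * hpow
  rw [Finset.sum_congr rfl h1, ← Finset.mul_sum]
  congr 1
  rw [← Finset.sum_range_reflect]
  refine Finset.sum_congr rfl fun k hk => ?_
  rw [Finset.mem_range] at hk
  have h3 : n + 1 - 1 - k = n - k := by omega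
  have h4 : n - (n - k) = k := by omega
  rw [h3, Nat.choose_symm (show k ≤ n by omega), h4]
  ring
end

section
/- For every nonnegative integer n, $\sum_{r=0}^{2n} \frac{(-1)^r \binom{2n}{r}}{2n+1-2r} = \frac{(-16)^n}{(2n+1)\binom{2n}{n}}$. -/
open Finset

lemma partial_frac (m : ℕ) : ∀ x : ℚ, (∀ k : ℕ, k ≤ m → x + k ≠ 0) →
    ∑ r ∈ range (m + 1), ((-1) ^ r * (m.choose r : ℚ)) / (x + r)
      = (m.factorial : ℚ) / ∏ k ∈ range (m + 1), (x + k) := by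
  induction m with
  | zero =>
    intro x hx
    simp
  | succ m ih =>
    intro x hx
    have hx0 : x ≠ 0 := by simpa using hx 0 (Nat.zero_le _)
    have hP : ∀ k : ℕ, k ≤ m → x + k ≠ 0 := fun k hk => hx k (le_trans hk (Nat.le_succ m))
    have hQ : ∀ k : ℕ, k ≤ m → (x + 1) + k ≠ 0 := by
      intro k hk h
      apply hx (k + 1) (by omega)
      push_cast
      linarith
    have hL1 := ih x hP
    have hL2 := ih (x + 1) hQ
    -- abbreviations
    set P : ℚ := ∏ k ∈ range (m + 1), (x + k) with hPdef
    set Q : ℚ := ∏ k ∈ range (m + 1), ((x + 1) + k) with hQdef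
    have hPne : P ≠ 0 := Finset.prod_ne_zero_iff.2 fun k hk => hP k (by
      simpa using Nat.lt_succ_iff.mp (Finset.mem_range.mp hk))
    have hQne : Q ≠ 0 := Finset.prod_ne_zero_iff.2 fun k hk => hQ k (by
      simpa using Nat.lt_succ_iff.mp (Finset.mem_range.mp hk))
    have hxm : x + ((m : ℚ) + 1) ≠ 0 := by
      have := hx (m + 1) le_rfl
      push_cast at this
      exact this
    -- product identities
    have hprod1 : ∏ k ∈ range (m + 2), (x + k) = P * (x + ((m : ℚ) + 1)) := by
      rw [Finset.prod_range_succ]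
      push_cast
      ring
    have hprod2 : ∏ k ∈ range (m + 2), (x + k) = x * Q := by
      rw [Finset.prod_range_succ']
      have : ∀ k ∈ range (m + 1), (x + ((k : ℚ) + 1)) = ((x + 1) + k) := by
        intro k _; ring
      rw [show (∏ k ∈ range (m + 1), (x + ((k + 1 : ℕ) : ℚ)))
          = ∏ k ∈ range (m + 1), ((x + 1) + k) from Finset.prod_congr rfl (by
            intro k _; push_cast; ring)]
      push_cast
      ring
    have key2 : x * Q = P * (x + ((m : ℚ) + 1)) := by rw [← hprod2, hprod1]
    -- sum manipulation
    have hT : ∑ r ∈ range (m + 1), ((-1 : ℚ) ^ r * (m.choose (r + 1) : ℚ)) / (x + ((r : ℚ) + 1))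
        = 1 / x - (m.factorial : ℚ) / P := by
      have e1 : ∑ r ∈ range (m + 1), ((-1 : ℚ) ^ r * (m.choose (r + 1) : ℚ)) / (x + ((r : ℚ) + 1))
          = ∑ r ∈ range m, ((-1 : ℚ) ^ r * (m.choose (r + 1) : ℚ)) / (x + ((r : ℚ) + 1)) := by
        rw [Finset.sum_range_succ, Nat.choose_succ_self]
        simp
      have e2 : ∑ r ∈ range (m + 1), ((-1) ^ r * (m.choose r : ℚ)) / (x + r)
          = (∑ r ∈ range m, ((-1 : ℚ) ^ (r + 1) * (m.choose (r + 1) : ℚ)) / (x + ((r : ℚ) + 1)))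
            + 1 / x := by
        rw [Finset.sum_range_succ']
        push_cast
        simp
      rw [hL1] at e2
      rw [e1]
      have e3 : ∑ r ∈ range m, ((-1 : ℚ) ^ r * (m.choose (r + 1) : ℚ)) / (x + ((r : ℚ) + 1))
          = -∑ r ∈ range m, ((-1 : ℚ) ^ (r + 1) * (m.choose (r + 1) : ℚ)) / (x + ((r : ℚ) + 1)) := by
        rw [← Finset.sum_neg_distrib]
        refine Finset.sum_congr rfl fun r _ => ?_
        rw [pow_succ]
        ring
      rw [e3]
      linarith [e2]
    have main : ∑ r ∈ range (m + 1 + 1), ((-1) ^ r * ((m + 1).choose r : ℚ)) / (x + r)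
        = (m.factorial : ℚ) / P - (m.factorial : ℚ) / Q := by
      rw [Finset.sum_range_succ']
      have step : ∀ r ∈ range (m + 1),
          ((-1 : ℚ) ^ (r + 1) * (((m + 1).choose (r + 1) : ℕ) : ℚ)) / (x + ((r + 1 : ℕ) : ℚ))
            = -(((-1) ^ r * (m.choose r : ℚ)) / ((x + 1) + r))
              - ((-1 : ℚ) ^ r * (m.choose (r + 1) : ℚ)) / (x + ((r : ℚ) + 1)) := by
        intro r _
        rw [Nat.choose_succ_succ, pow_succ]
        push_cast
        rw [show (x + 1) + (r : ℚ) = x + ((r : ℚ) + 1) from by ring]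
        simp only [Nat.succ_eq_add_one]
        ring
      rw [Finset.sum_congr rfl step, Finset.sum_sub_distrib, Finset.sum_neg_distrib]
      rw [show (∑ r ∈ range (m + 1), ((-1) ^ r * (m.choose r : ℚ)) / ((x + 1) + r))
          = (m.factorial : ℚ) / Q from by
        have := hL2
        refine Eq.trans ?_ this
        refine Finset.sum_congr rfl fun r _ => ?_
        ring_nf]
      rw [hT]
      simp only [Nat.choose_zero_right, Nat.cast_one]
      ring
    rw [main]
    rw [hprod1]
    rw [Nat.factorial_succ]
    push_cast
    field_simp
    linear_combination key2

lemma prodlem (n : ℕ) : (2 : ℚ) * (-16) ^ n * ∏ k ∈ range (2 * n + 1), ((k : ℚ) - n - 1/2)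
    = -(((2 * n).factorial : ℚ) * (2 * n + 1) * ((2 * n).choose n : ℚ)) := by
  induction n with
  | zero => norm_num
  | succ n ih =>
    have hsplit : ∏ k ∈ range (2 * (n + 1) + 1), ((k : ℚ) - (n + 1 : ℕ) - 1/2)
        = (-(n : ℚ) - 3/2) * (((n : ℚ) + 1/2) * ∏ k ∈ range (2 * n + 1), ((k : ℚ) - n - 1/2)) := by
      rw [show 2 * (n + 1) + 1 = (2 * n + 2) + 1 from by ring]
      rw [Finset.prod_range_succ']
      rw [Finset.prod_range_succ]
      rw [show (∏ k ∈ range (2 * n + 1), (((k + 1 : ℕ) : ℚ) - (n + 1 : ℕ) - 1/2))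
          = ∏ k ∈ range (2 * n + 1), ((k : ℚ) - n - 1/2) from Finset.prod_congr rfl (by
            intro k _; push_cast; ring)]
      push_cast
      ring
    have hcb : ((n : ℚ) + 1) * ((2 * (n + 1)).choose (n + 1) : ℚ)
        = 2 * (2 * (n : ℚ) + 1) * ((2 * n).choose n : ℚ) := by
      have := Nat.succ_mul_centralBinom_succ n
      have h2 : (n + 1) * ((2 * (n + 1)).choose (n + 1)) = 2 * (2 * n + 1) * ((2 * n).choose n) := this
      exact_mod_cast h2
    have hfac : ((2 * (n + 1)).factorial : ℚ)
        = (2 * (n : ℚ) + 2) * ((2 * (n : ℚ) + 1) * ((2 * n).factorial : ℚ)) := by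
      have : (2 * (n + 1)).factorial = (2 * n + 2) * ((2 * n + 1) * (2 * n).factorial) := by
        rw [show 2 * (n + 1) = (2 * n + 1) + 1 from by ring, Nat.factorial_succ, Nat.factorial_succ]
      rw [this]
      push_cast
      ring
    rw [hsplit, hfac]
    push_cast
    push_cast at ih
    linear_combination (4 * (2 * (n : ℚ) + 3) * (2 * n + 1)) * ih
      + (2 * (2 * (n : ℚ) + 1) * (2 * n + 3) * ((2 * n).factorial : ℚ)) * hcb

theorem sun_identity_3_1 (n : ℕ) :
    ∑ r ∈ Finset.range (2 * n + 1),
        ((-1) ^ r * ((2 * n).choose r : ℚ)) / ((2 * n + 1 : ℚ) - 2 * r) =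
      (-16 : ℚ) ^ n / ((2 * n + 1) * ((2 * n).choose n : ℚ)) := by
  set x : ℚ := -(n : ℚ) - 1/2 with hxdef
  have hx : ∀ k : ℕ, k ≤ 2 * n → x + k ≠ 0 := by
    intro k hk h
    have h2 : (2 * k : ℚ) = 2 * n + 1 := by
      rw [hxdef] at h
      linarith
    have h3 : (2 * k : ℕ) = 2 * n + 1 := by exact_mod_cast h2
    omega
  have hsum := partial_frac (2 * n) x hx
  have congr1 : ∀ r ∈ Finset.range (2 * n + 1),
      ((-1) ^ r * ((2 * n).choose r : ℚ)) / ((2 * n + 1 : ℚ) - 2 * r)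
        = (-(1/2)) * (((-1) ^ r * ((2 * n).choose r : ℚ)) / (x + r)) := by
    intro r _
    have hd : (2 * (n : ℚ) + 1) - 2 * r = (-2) * (x + r) := by rw [hxdef]; ring
    rw [hd, div_eq_mul_inv, div_eq_mul_inv, mul_inv]
    ring
  rw [Finset.sum_congr rfl congr1, ← Finset.mul_sum, hsum]
  have hprod : ∏ k ∈ range (2 * n + 1), (x + k) = ∏ k ∈ range (2 * n + 1), ((k : ℚ) - n - 1/2) :=
    Finset.prod_congr rfl fun k _ => by rw [hxdef]; ring
  rw [hprod]
  have hpl := prodlem n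
  have hPne : (∏ k ∈ range (2 * n + 1), ((k : ℚ) - n - 1/2)) ≠ 0 := by
    refine Finset.prod_ne_zero_iff.2 fun k hk => ?_
    have := hx k (Nat.lt_succ_iff.mp (Finset.mem_range.mp hk))
    rw [hxdef] at this
    intro h; exact this (by linarith)
  have hfne : ((2 * n).factorial : ℚ) ≠ 0 := Nat.cast_ne_zero.2 (Nat.factorial_ne_zero _)
  have hcne : ((2 * n).choose n : ℚ) ≠ 0 :=
    Nat.cast_ne_zero.2 (Nat.choose_pos (by omega)).ne'
  have h2n1 : (2 * (n : ℚ) + 1) ≠ 0 := by positivity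
  have h16 : ((-16 : ℚ)) ^ n ≠ 0 := pow_ne_zero _ (by norm_num)
  have h2n1 : (2 * (n : ℚ) + 1) ≠ 0 := by positivity
  rw [show -(1/2 : ℚ) * (((2 * n).factorial : ℚ) / ∏ k ∈ range (2 * n + 1), ((k : ℚ) - n - 1/2))
      = (-((2 * n).factorial : ℚ)) / (2 * ∏ k ∈ range (2 * n + 1), ((k : ℚ) - n - 1/2)) from by
    ring]
  rw [div_eq_div_iff (mul_ne_zero two_ne_zero hPne) (mul_ne_zero h2n1 hcne)]
  linear_combination -hpl
end

section
/- For every nonnegative integer n, $\sum_{r=0}^{2n} \frac{(-1)^r \binom{2n}{r}}{(2n+1-2r)^2} = \frac{(-16)^n}{(2n+1)^2\binom{2n}{n}}$. -/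
open Finset

private def Pp (m : ℕ) (x : ℚ) : ℚ := ∏ k ∈ range (m+1), (x + k)
private def Hh (m : ℕ) (x : ℚ) : ℚ := ∑ k ∈ range (m+1), 1/(x + k)

private lemma Pp_succ (m : ℕ) (x : ℚ) : Pp (m+1) x = Pp m x * (x + (m+1)) := by
  rw [Pp, prod_range_succ]
  push_cast
  rfl

private lemma Pp_succ' (m : ℕ) (x : ℚ) : Pp (m+1) x = x * Pp m (x+1) := by
  rw [Pp, prod_range_succ']
  simp only [Nat.cast_zero, add_zero, Nat.cast_add, Nat.cast_one]
  rw [mul_comm]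
  congr 1
  apply prod_congr rfl
  intro k _
  push_cast
  ring

private lemma Hh_succ (m : ℕ) (x : ℚ) : Hh (m+1) x = Hh m x + 1/(x + (m+1)) := by
  rw [Hh, sum_range_succ]
  push_cast
  rfl

private lemma Hh_succ' (m : ℕ) (x : ℚ) : Hh (m+1) x = 1/x + Hh m (x+1) := by
  rw [Hh, sum_range_succ']
  simp only [Nat.cast_zero, add_zero]
  rw [add_comm]
  congr 1
  apply sum_congr rfl
  intro k _
  push_cast
  ring

private lemma Pp_ne_zero (m : ℕ) (x : ℚ) (h : ∀ k ∈ range (m+1), x + (k:ℚ) ≠ 0) :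
    Pp m x ≠ 0 := prod_ne_zero_iff.mpr h

private lemma main_pf (m : ℕ) : ∀ x : ℚ, (∀ k ∈ range (m+1), x + (k:ℚ) ≠ 0) →
    ∑ r ∈ range (m+1), ((-1)^r * (m.choose r : ℚ)) / (x + r)^2
      = (m.factorial : ℚ) * Hh m x / Pp m x := by
  induction m with
  | zero =>
    intro x h
    have hx : x ≠ 0 := by simpa using h 0 (by simp)
    simp [Pp, Hh]
    field_simp
  | succ m ih =>
    intro x h
    have hx : x ≠ 0 := by simpa using h 0 (by simp)
    have h0 : ∀ k ∈ range (m+1), x + (k:ℚ) ≠ 0 := fun k hk =>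
      h k (mem_range.mpr (Nat.lt_succ_of_lt (mem_range.mp hk)))
    have h1 : ∀ k ∈ range (m+1), (x+1) + (k:ℚ) ≠ 0 := by
      intro k hk
      have hh := h (k+1) (mem_range.mpr (by have := mem_range.mp hk; omega))
      intro hc; apply hh; push_cast; linarith
    have hb : x + ((m:ℚ)+1) ≠ 0 := by
      have := h (m+1) (mem_range.mpr (by omega))
      push_cast at this; exact this
    -- sum manipulation
    have h2 : ∑ r ∈ range (m+2), ((-1)^r * (m.choose r : ℚ)) / (x + r)^2
        = ∑ r ∈ range (m+1), ((-1)^r * (m.choose r : ℚ)) / (x + r)^2 := by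
      rw [sum_range_succ, Nat.choose_succ_self]
      simp
    have h4 := sum_range_succ' (fun r => ((-1)^r * (m.choose r : ℚ)) / (x + r)^2) (m+1)
    rw [h2] at h4
    have hsum : ∑ r ∈ range (m+2), ((-1)^r * ((m+1).choose r : ℚ)) / (x + r)^2
        = ∑ r ∈ range (m+1), ((-1)^r * (m.choose r : ℚ)) / (x + r)^2
          - ∑ r ∈ range (m+1), ((-1)^r * (m.choose r : ℚ)) / ((x+1) + r)^2 := by
      rw [sum_range_succ' (fun r => ((-1)^r * ((m+1).choose r : ℚ)) / (x + r)^2) (m+1)]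
      have expand : ∀ r ∈ range (m+1),
          ((-1)^(r+1) * ((m+1).choose (r+1) : ℚ)) / (x + ((r+1 : ℕ) : ℚ))^2
            = ((-1)^(r+1) * (m.choose (r+1) : ℚ)) / (x + ((r+1 : ℕ) : ℚ))^2
              - ((-1)^r * (m.choose r : ℚ)) / ((x+1) + r)^2 := by
        intro r _
        rw [Nat.choose_succ_succ]
        push_cast
        ring
      rw [sum_congr rfl expand, sum_sub_distrib]
      simp only [Nat.choose_zero_right, pow_zero, one_mul, Nat.cast_one, Nat.cast_zero,
        add_zero] at h4 ⊢
      push_cast at h4 ⊢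
      linarith [h4]
    rw [hsum, ih x h0, ih (x+1) h1]
    -- now pure field algebra
    have hQ : Pp m x ≠ 0 := Pp_ne_zero m x h0
    have hR : Pp m (x+1) ≠ 0 := Pp_ne_zero m (x+1) h1
    have e2 : Pp (m+1) x = Pp m x * (x + ((m:ℚ)+1)) := by rw [Pp_succ]; try push_cast; try ring
    have e3 : x * Pp m (x+1) = Pp m x * (x + ((m:ℚ)+1)) := by
      rw [← e2, Pp_succ' m x]
    have e4 : Hh m x = Hh (m+1) x - 1/(x + ((m:ℚ)+1)) := by
      rw [Hh_succ]; try push_cast; try ring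
    have e5 : Hh m (x+1) = Hh (m+1) x - 1/x := by rw [Hh_succ']; ring
    have e6 : Pp m (x+1) = Pp m x * (x + ((m:ℚ)+1)) / x := by
      field_simp
      linear_combination e3
    have hfact : (((m+1).factorial : ℚ)) = ((m:ℚ)+1) * (m.factorial : ℚ) := by
      rw [Nat.factorial_succ]; push_cast; ring
    rw [e2, e4, e5, e6, hfact]
    have hpush : Pp (m+1) x = Pp m x * (x + ((m:ℚ)+1)) := e2
    push_cast
    field_simp
    ring

private lemma Hval (n : ℕ) : Hh (2*n) (-(2*(n:ℚ)+1)/2) = -2/(2*(n:ℚ)+1) := by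
  induction n with
  | zero => simp [Hh]; norm_num
  | succ n ih =>
    have key : Hh (2*(n+1)) (-(2*((n:ℚ)+1)+1)/2)
        = 1/(-(2*((n:ℚ)+1)+1)/2) + Hh (2*n) (-(2*(n:ℚ)+1)/2)
          + 1/((-(2*(n:ℚ)+1)/2) + (2*n+1)) := by
      have e1 : (2*(n+1) : ℕ) = (2*n+1)+1 := by ring
      rw [e1, Hh_succ']
      have e2 : (-(2*((n:ℚ)+1)+1)/2) + 1 = -(2*(n:ℚ)+1)/2 := by ring
      rw [e2, Hh_succ]
      push_cast
      ring
    push_cast at key ⊢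
    have h1 : (2*(n:ℚ)+1) ≠ 0 := by positivity
    have h3 : (2*(n:ℚ)+3) ≠ 0 := by positivity
    have h3' : (-(2*((n:ℚ)+1)+1)/2) ≠ 0 := by intro hc; apply h3; linarith
    have h1' : (-(2*(n:ℚ)+1)/2 + (2*(n:ℚ)+1)) ≠ 0 := by intro hc; apply h1; linarith
    have c1 : 1/(-(2*((n:ℚ)+1)+1)/2) = -2/(2*(n:ℚ)+3) := by
      rw [div_eq_div_iff h3' h3]; ring
    have c2 : 1/(-(2*(n:ℚ)+1)/2 + (2*(n:ℚ)+1)) = 2/(2*(n:ℚ)+1) := by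
      rw [div_eq_div_iff h1' h1]; ring
    rw [key, c1, c2, ih]
    ring

private lemma Pval (n : ℕ) :
    Pp (2*n) (-(2*(n:ℚ)+1)/2) * (2 * 16^n * ((n.factorial : ℚ))^2)
      = (-1)^(n+1) * ((2*n+1).factorial : ℚ) * ((2*n).factorial : ℚ) := by
  induction n with
  | zero => simp [Pp]
  | succ n ih =>
    have key : Pp (2*(n+1)) (-(2*((n:ℚ)+1)+1)/2)
        = (-(2*((n:ℚ)+1)+1)/2) * ((-(2*(n:ℚ)+1)/2) + (2*n+1)) * Pp (2*n) (-(2*(n:ℚ)+1)/2) := by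
      have e1 : (2*(n+1) : ℕ) = (2*n+1)+1 := by ring
      rw [e1, Pp_succ']
      have e2 : (-(2*((n:ℚ)+1)+1)/2) + 1 = -(2*(n:ℚ)+1)/2 := by ring
      rw [e2, Pp_succ]
      push_cast
      ring
    have f1 : ((2*(n+1)+1).factorial : ℚ) = (2*(n:ℚ)+3) * (2*(n:ℚ)+2) * ((2*n+1).factorial : ℚ) := by
      have : (2*(n+1)+1 : ℕ) = (2*n+1)+1+1 := by ring
      rw [this, Nat.factorial_succ, Nat.factorial_succ]
      push_cast
      ring
    have f2 : ((2*(n+1)).factorial : ℚ) = (2*(n:ℚ)+2) * (2*(n:ℚ)+1) * ((2*n).factorial : ℚ) := by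
      have : (2*(n+1) : ℕ) = (2*n)+1+1 := by ring
      rw [this, Nat.factorial_succ, Nat.factorial_succ]
      push_cast
      ring
    have f3 : (((n+1).factorial : ℚ)) = ((n:ℚ)+1) * (n.factorial : ℚ) := by
      rw [Nat.factorial_succ]; push_cast; ring
    push_cast at key ⊢
    rw [key, f1, f2, f3, pow_succ (16:ℚ) n, pow_succ (-1:ℚ) (n+1)]
    push_cast
    linear_combination (-(2*(n:ℚ)+3)*(2*(n:ℚ)+1)*4*((n:ℚ)+1)^2) * ih

theorem sun_identity_3_2 (n : ℕ) :
    ∑ r ∈ Finset.range (2 * n + 1),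
        ((-1) ^ r * ((2 * n).choose r : ℚ)) / ((2 * n + 1 : ℚ) - 2 * r) ^ 2 =
      (-16 : ℚ) ^ n / ((2 * n + 1) ^ 2 * ((2 * n).choose n : ℚ)) := by
  have hne : ∀ k ∈ Finset.range (2*n+1), (-(2*(n:ℚ)+1)/2) + (k:ℚ) ≠ 0 := by
    intro k hk hc
    have h2 : ((2*k : ℕ) : ℚ) = ((2*n+1 : ℕ) : ℚ) := by push_cast; linarith
    have h3 : (2*k : ℕ) = 2*n+1 := Nat.cast_injective h2
    omega
  have hmain := main_pf (2*n) (-(2*(n:ℚ)+1)/2) hne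
  have hterm : ∀ r ∈ Finset.range (2*n+1),
      ((-1)^r * ((2*n).choose r : ℚ)) / ((2 * n + 1 : ℚ) - 2 * r)^2
        = (1/4) * (((-1)^r * ((2*n).choose r : ℚ)) / ((-(2*(n:ℚ)+1)/2) + r)^2) := by
    intro r _
    rw [show ((2 * (n:ℚ) + 1) - 2 * r)^2 = 4 * ((-(2*(n:ℚ)+1)/2) + r)^2 from by ring,
      div_mul_eq_div_div_swap]
    ring
  rw [Finset.sum_congr rfl hterm, ← Finset.mul_sum, hmain, Hval]
  have hPne : Pp (2*n) (-(2*(n:ℚ)+1)/2) ≠ 0 := Pp_ne_zero _ _ hne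
  have hc16 : ((2:ℚ) * 16^n * ((n.factorial : ℚ))^2) ≠ 0 := by positivity
  have hP : Pp (2*n) (-(2*(n:ℚ)+1)/2)
      = (-1)^(n+1) * ((2*n+1).factorial : ℚ) * ((2*n).factorial : ℚ)
          / (2 * 16^n * ((n.factorial : ℚ))^2) := by
    rw [eq_div_iff hc16]; exact Pval n
  have hchN := Nat.choose_mul_factorial_mul_factorial (show n ≤ 2*n by omega)
  rw [show 2*n - n = n from by omega] at hchN
  have hch2 : ((2*n).choose n : ℚ) * (n.factorial : ℚ) * (n.factorial : ℚ)
      = ((2*n).factorial : ℚ) := by exact_mod_cast hchN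
  have f1 : ((2*n+1).factorial : ℚ) = (2*(n:ℚ)+1) * ((2*n).factorial : ℚ) := by
    rw [Nat.factorial_succ]; push_cast; ring
  have h16 : ((-16:ℚ))^n = (-1)^n * 16^n := by rw [← neg_one_mul, mul_pow]
  have h2n1 : (2*(n:ℚ)+1) ≠ 0 := by positivity
  have hnf : (n.factorial : ℚ) ≠ 0 := Nat.cast_ne_zero.mpr n.factorial_ne_zero
  have h2nf : ((2*n).factorial : ℚ) ≠ 0 := Nat.cast_ne_zero.mpr (2*n).factorial_ne_zero
  have hchne : ((2*n).choose n : ℚ) ≠ 0 :=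
    Nat.cast_ne_zero.mpr (Nat.choose_pos (show n ≤ 2*n by omega)).ne'
  rcases Nat.even_or_odd n with hpar | hpar
  · rw [hP, f1, h16, ← hch2, pow_succ, hpar.neg_one_pow]
    push_cast
    field_simp
    ring
  · rw [hP, f1, h16, ← hch2, pow_succ, hpar.neg_one_pow]
    push_cast
    field_simp
    ring
end

section
/- For every nonnegative integer n, $\sum_{r=0}^{2n} \frac{\binom{2n}{r}}{2n+1-2r} = \frac{4^n}{2n+1}$. -/
open Finset

lemma odd_sum_zero (m : ℕ) :
    ∑ s ∈ Finset.range (2*m+2), ((2*m+1).choose s : ℚ) / ((2*m+1 : ℚ) - 2*s) = 0 := by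
  set f : ℕ → ℚ := fun s => ((2*m+1).choose s : ℚ) / ((2*m+1 : ℚ) - 2*s) with hf
  have hrefl := Finset.sum_range_reflect f (2*m+2)
  have hpair : ∀ j ∈ Finset.range (2*m+2), f (2*m+1 - j) + f j = 0 := by
    intro j hj
    have hjle : j ≤ 2*m+1 := by simp at hj; omega
    have hcs : (2*m+1).choose (2*m+1 - j) = (2*m+1).choose j := Nat.choose_symm hjle
    have hcast : ((2*m+1 - j : ℕ) : ℚ) = (2*m+1 : ℚ) - j := by
      push_cast [Nat.cast_sub hjle]; ring
    simp only [hf, hcs, hcast]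
    have hd : ((2*m+1 : ℚ) - 2*((2*m+1 : ℚ) - j)) = -((2*m+1 : ℚ) - 2*j) := by ring
    rw [hd, div_neg]
    ring
  have h2 : (∑ j ∈ Finset.range (2*m+2), (f (2*m+2-1-j) + f j)) = 0 := by
    refine Finset.sum_eq_zero ?_
    intro j hj
    have he : 2*m+2-1-j = 2*m+1-j := by omega
    rw [he]
    exact hpair j hj
  rw [Finset.sum_add_distrib, hrefl] at h2
  linarith

lemma weighted_sum_zero (m : ℕ) :
    ∑ r ∈ Finset.range (2*(m+1)+1),
      (r : ℚ) * ((2*(m+1)).choose r : ℚ) / ((2*(m+1)+1 : ℚ) - 2*r) = 0 := by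
  rw [Finset.sum_range_succ']
  have h0 : ((0:ℕ) : ℚ) * ((2*(m+1)).choose 0 : ℚ) / ((2*(m+1)+1 : ℚ) - 2*(0:ℕ)) = 0 := by
    simp
  rw [h0, add_zero]
  have hterm : ∀ s, ((s+1 : ℕ) : ℚ) * ((2*(m+1)).choose (s+1) : ℚ) / ((2*(m+1)+1 : ℚ) - 2*((s+1:ℕ):ℚ))
      = (2*m+2 : ℚ) * (((2*m+1).choose s : ℚ) / ((2*m+1 : ℚ) - 2*s)) := by
    intro s
    have hc : (2*m+2) * (2*m+1).choose s = (2*(m+1)).choose (s+1) * (s+1) := by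
      have := Nat.add_one_mul_choose_eq (2*m+1) s
      have h1 : 2*(m+1) = (2*m+1).succ := by omega
      rw [h1]
      simpa using this
    have hc' : (s+1) * (2*(m+1)).choose (s+1) = (2*m+2) * (2*m+1).choose s := by
      rw [mul_comm]; exact hc.symm
    have hnum : ((s+1 : ℕ) : ℚ) * ((2*(m+1)).choose (s+1) : ℚ) = (2*m+2 : ℚ) * ((2*m+1).choose s : ℚ) := by
      exact_mod_cast hc'
    have hden : ((2*(m+1)+1 : ℚ) - 2*((s+1:ℕ):ℚ)) = ((2*m+1 : ℚ) - 2*s) := by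
      push_cast; ring
    rw [hden, hnum, mul_div_assoc]
  calc ∑ s ∈ Finset.range (2*(m+1)), ((s+1 : ℕ) : ℚ) * ((2*(m+1)).choose (s+1) : ℚ) / ((2*(m+1)+1 : ℚ) - 2*((s+1:ℕ):ℚ))
      = ∑ s ∈ Finset.range (2*m+2), (2*m+2 : ℚ) * (((2*m+1).choose s : ℚ) / ((2*m+1 : ℚ) - 2*s)) := by
        apply Finset.sum_congr (by ring_nf)
        intro s _; exact hterm s
    _ = (2*m+2 : ℚ) * ∑ s ∈ Finset.range (2*m+2), (((2*m+1).choose s : ℚ) / ((2*m+1 : ℚ) - 2*s)) := by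
        rw [Finset.mul_sum]
    _ = 0 := by rw [odd_sum_zero m]; ring

theorem sun_identity_unsigned (n : ℕ) :
    ∑ r ∈ Finset.range (2 * n + 1),
        ((2 * n).choose r : ℚ) / ((2 * n + 1 : ℚ) - 2 * r) =
      (4 : ℚ) ^ n / (2 * n + 1) := by
  cases n with
  | zero => norm_num
  | succ m =>
    set N := 2 * (m + 1) with hN
    have hNd : ∀ r : ℕ, ((N : ℚ) + 1 - 2 * r) ≠ 0 := by
      intro r h
      have : ((N : ℚ) + 1) = 2 * r := by linarith
      have : (N + 1 : ℕ) = 2 * r := by exact_mod_cast this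
      omega
    have key : ∑ r ∈ Finset.range (N + 1),
        ((N : ℚ) + 1) * (((N).choose r : ℚ) / ((N + 1 : ℚ) - 2 * r)) = (4 : ℚ) ^ (m+1) := by
      have hsplit : ∀ r ∈ Finset.range (N + 1),
          ((N : ℚ) + 1) * (((N).choose r : ℚ) / ((N + 1 : ℚ) - 2 * r))
          = ((N).choose r : ℚ) + 2 * ((r : ℚ) * ((N).choose r : ℚ) / ((N + 1 : ℚ) - 2 * r)) := by
        intro r _
        have hd := hNd r
        field_simp
        ring
      rw [Finset.sum_congr rfl hsplit, Finset.sum_add_distrib]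
      have h1 : ∑ r ∈ Finset.range (N + 1), ((N).choose r : ℚ) = (2:ℚ)^N := by
        have := Nat.sum_range_choose N
        have : ((∑ i ∈ Finset.range (N+1), N.choose i : ℕ) : ℚ) = ((2^N : ℕ) : ℚ) := by
          exact_mod_cast congrArg (Nat.cast : ℕ → ℚ) this
        push_cast at this
        convert this using 2
      have h2 : ∑ r ∈ Finset.range (N + 1), 2 * ((r : ℚ) * ((N).choose r : ℚ) / ((N + 1 : ℚ) - 2 * r)) = 0 := by
        rw [← Finset.mul_sum]
        have := weighted_sum_zero m
        rw [hN]
        convert mul_eq_zero_of_right 2 this using 3 <;> push_cast <;> ring_nf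
      rw [h1, h2, add_zero, hN]
      rw [show (2:ℚ)^(2*(m+1)) = (4:ℚ)^(m+1) by rw [pow_mul]; norm_num]
    have hNne : ((N : ℚ) + 1) ≠ 0 := by positivity
    have hS : ∑ r ∈ Finset.range (N + 1), (((N).choose r : ℚ) / ((N + 1 : ℚ) - 2 * r))
        = (4 : ℚ) ^ (m+1) / ((N : ℚ) + 1) := by
      rw [eq_div_iff hNne, mul_comm, Finset.mul_sum]
      exact key
    have hcN : ((N : ℚ)) = 2 * ((m+1 : ℕ) : ℚ) := by rw [hN]; push_cast; ring
    rw [hcN] at hS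
    exact hS
end

section
/- Let p be an odd prime. Then $\sum_{k=1}^{p-1} \frac{D_k}{k} \equiv -\frac{2^{p-1}-1}{p} \pmod{p}$, where $1/k$ denotes the inverse of k mod p. -/
open Finset Polynomial

section SunAux

variable {p : ℕ} [Fact p.Prime]

private lemma zsum_range (f : ZMod p → ZMod p) :
    ∑ k ∈ range p, f (k : ZMod p) = ∑ x : ZMod p, f x := by
  have : NeZero p := ⟨(Fact.out : p.Prime).ne_zero⟩
  refine Finset.sum_nbij' (fun k => (k : ZMod p)) (fun x => x.val) ?_ ?_ ?_ ?_ ?_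
  · intro a _; exact mem_univ _
  · intro a _; exact mem_range.mpr (ZMod.val_lt a)
  · intro a ha; exact ZMod.val_cast_of_lt (mem_range.mp ha)
  · intro a _; exact ZMod.natCast_zmod_val a
  · intro a _; rfl

private lemma icc_eq_erase : Finset.Icc 1 (p - 1) = (Finset.range p).erase 0 := by
  have : 1 ≤ p := (Fact.out : p.Prime).one_lt.le
  ext k
  simp only [mem_Icc, mem_erase, mem_range]
  omega

private lemma zsum_icc (f : ZMod p → ZMod p) :
    ∑ k ∈ Finset.Icc 1 (p - 1), f (k : ZMod p) = (∑ x : ZMod p, f x) - f 0 := by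
  rw [icc_eq_erase, Finset.sum_erase_eq_sub (mem_range.mpr (Fact.out : p.Prime).pos),
    zsum_range, Nat.cast_zero]

private lemma zsum_eval_eq_zero (P : (ZMod p)[X]) (hP : P.natDegree < p - 1) :
    ∑ x : ZMod p, P.eval x = 0 := by
  simp_rw [eval_eq_sum_range]
  rw [Finset.sum_comm]
  refine Finset.sum_eq_zero fun i hi => ?_
  rw [← Finset.mul_sum, FiniteField.sum_pow_lt_card_sub_one _ _ ?_, mul_zero]
  rw [ZMod.card]
  exact lt_of_le_of_lt (Nat.lt_succ_iff.mp (mem_range.mp hi)) hP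

private lemma cast_ne_zero_of_mem {k : ℕ} (h1 : 1 ≤ k) (h2 : k ≤ p - 1) : (k : ZMod p) ≠ 0 := by
  rw [Ne, ZMod.natCast_eq_zero_iff]
  intro hdvd
  have := Nat.le_of_dvd (by omega) hdvd
  have := (Fact.out : p.Prime).two_le
  omega

private lemma prod_plus (k j : ℕ) :
    (∏ i ∈ range j, ((k : ZMod p) + ((i+1 : ℕ) : ZMod p)))
      = ((Nat.factorial j * (k + j).choose j : ℕ) : ZMod p) := by
  rw [← Nat.descFactorial_eq_factorial_mul_choose, Nat.descFactorial_eq_prod_range]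
  have h : ∏ i ∈ range j, (k + j - i) = ∏ i ∈ range j, (k + (i+1)) := by
    rw [← Finset.prod_range_reflect (fun i => k + (i+1)) j]
    refine Finset.prod_congr rfl fun i hi => ?_
    have := mem_range.mp hi; omega
  rw [h]
  push_cast
  rfl

private lemma prod_minus {k j : ℕ} (hk : 1 ≤ k) :
    (∏ i ∈ range (j-1), ((k : ZMod p) - ((i+1 : ℕ) : ZMod p)))
      = ((Nat.factorial (j-1) * (k - 1).choose (j-1) : ℕ) : ZMod p) := by
  rcases lt_or_ge k j with hkj | hkj
  · rw [Nat.choose_eq_zero_of_lt (by omega), mul_zero, Nat.cast_zero]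
    refine Finset.prod_eq_zero (i := k - 1) (mem_range.mpr (by omega)) ?_
    have : k - 1 + 1 = k := by omega
    rw [this, sub_self]
  · rw [← Nat.descFactorial_eq_factorial_mul_choose, Nat.descFactorial_eq_prod_range]
    rw [Nat.cast_prod]
    refine Finset.prod_congr rfl fun i hi => ?_
    have hi' := mem_range.mp hi
    have h1 : k - 1 - i = k - (i+1) := by omega
    rw [h1, Nat.cast_sub (by omega)]
    try push_cast

private lemma fact_ne_zero {j : ℕ} (hj : j < p) : ((Nat.factorial j : ℕ) : ZMod p) ≠ 0 := by
  rw [Ne, ZMod.natCast_eq_zero_iff]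
  intro h
  exact absurd ((Nat.Prime.dvd_factorial (Fact.out : p.Prime)).mp h) (by omega)

private lemma G_small {j : ℕ} (hj1 : 1 ≤ j) (hjm : 2 * j ≤ p - 1) :
    ∑ k ∈ Finset.Icc 1 (p - 1), (((k-1).choose (j-1) * (k+j).choose j : ℕ) : ZMod p)
      = (-1) ^ j := by
  have hpp : 2 ≤ p := (Fact.out : p.Prime).two_le
  set P : (ZMod p)[X] :=
    (∏ i ∈ range (j-1), (X - C ((i+1 : ℕ) : ZMod p))) *
      ∏ i ∈ range j, (X + C ((i+1 : ℕ) : ZMod p)) with hPdef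
  have hdeg : P.natDegree < p - 1 := by
    have h1 : P.natDegree ≤ (j-1) * 1 + j * 1 := by
      refine le_trans (natDegree_mul_le) (add_le_add ?_ ?_)
      · refine le_trans (natDegree_prod_le _ _) ?_
        refine le_trans (Finset.sum_le_sum fun i _ => le_of_eq (natDegree_X_sub_C _)) ?_
        simp [mul_comm]
      · refine le_trans (natDegree_prod_le _ _) ?_
        refine le_trans (Finset.sum_le_sum fun i _ => le_of_eq (natDegree_X_add_C _)) ?_
        simp [mul_comm]
    omega
  have heval : ∀ k : ℕ, 1 ≤ k →
      P.eval (k : ZMod p) = ((Nat.factorial (j-1) * Nat.factorial j : ℕ) : ZMod p) *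
        (((k-1).choose (j-1) * (k+j).choose j : ℕ) : ZMod p) := by
    intro k hk
    rw [hPdef]
    simp only [eval_mul, eval_prod, eval_sub, eval_add, eval_X, eval_C]
    rw [prod_minus hk, prod_plus k j]
    push_cast
    ring
  have heval0 : P.eval 0 = (-1) ^ (j-1) *
      ((Nat.factorial (j-1) * Nat.factorial j : ℕ) : ZMod p) := by
    rw [hPdef]
    simp only [eval_mul, eval_prod, eval_sub, eval_add, eval_X, eval_C, zero_sub, zero_add]
    have h1 : ∀ m : ℕ, (∏ i ∈ range m, (((i+1:ℕ) : ZMod p))) = ((Nat.factorial m : ℕ) : ZMod p) := by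
      intro m
      rw [← Finset.prod_range_add_one_eq_factorial, Nat.cast_prod]
    have h2 : (∏ i ∈ range (j-1), (-((i+1:ℕ) : ZMod p)))
        = (-1) ^ (j-1) * ((Nat.factorial (j-1) : ℕ) : ZMod p) := by
      have hcongr : ∀ i ∈ range (j-1), -((i+1:ℕ) : ZMod p) = (-1) * ((i+1:ℕ) : ZMod p) :=
        fun i _ => by ring
      rw [Finset.prod_congr rfl hcongr, Finset.prod_mul_distrib, Finset.prod_const,
        Finset.card_range, h1]
    rw [h2, h1]
    push_cast
    ring
  have key : ((Nat.factorial (j-1) * Nat.factorial j : ℕ) : ZMod p) *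
      (∑ k ∈ Finset.Icc 1 (p - 1), (((k-1).choose (j-1) * (k+j).choose j : ℕ) : ZMod p))
      = ((Nat.factorial (j-1) * Nat.factorial j : ℕ) : ZMod p) * (-1) ^ j := by
    rw [Finset.mul_sum]
    calc ∑ k ∈ Finset.Icc 1 (p - 1), ((Nat.factorial (j-1) * Nat.factorial j : ℕ) : ZMod p) *
          (((k-1).choose (j-1) * (k+j).choose j : ℕ) : ZMod p)
        = ∑ k ∈ Finset.Icc 1 (p - 1), P.eval ((k : ℕ) : ZMod p) := by
          refine Finset.sum_congr rfl fun k hk => ?_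
          rw [heval k (Finset.mem_Icc.mp hk).1]
      _ = (∑ x : ZMod p, P.eval x) - P.eval 0 := zsum_icc (p := p) fun x => P.eval x
      _ = - P.eval 0 := by rw [zsum_eval_eq_zero P hdeg, zero_sub]
      _ = ((Nat.factorial (j-1) * Nat.factorial j : ℕ) : ZMod p) * (-1) ^ j := by
          have hj' : (-1 : ZMod p) ^ j = -(-1) ^ (j-1) := by
            have h3 : j = (j - 1) + 1 := by omega
            rw [h3, pow_succ]
            ring_nf
            congr 1
            congr 1
            omega
          rw [heval0, hj']
          ring
  have hne : ((Nat.factorial (j-1) * Nat.factorial j : ℕ) : ZMod p) ≠ 0 := by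
    push_cast
    exact mul_ne_zero (fact_ne_zero (by omega)) (fact_ne_zero (by omega))
  exact mul_left_cancel₀ hne key

private lemma G_big_term {j k : ℕ} (hj : p - 1 < 2 * j) (hj2 : j ≤ p - 1)
    (hk : 1 ≤ k) (hk2 : k ≤ p - 1) :
    (((k-1).choose (j-1) * (k+j).choose j : ℕ) : ZMod p) = 0 := by
  have hpp : 2 ≤ p := (Fact.out : p.Prime).two_le
  rcases lt_or_ge k j with hkj | hkj
  · rw [Nat.choose_eq_zero_of_lt (by omega), zero_mul, Nat.cast_zero]
  · have hdvd : p ∣ (k + j).choose j :=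
      (Fact.out : p.Prime).dvd_choose (by omega) (by omega) (by omega)
    rw [Nat.cast_mul, (ZMod.natCast_eq_zero_iff _ _).mpr hdvd, mul_zero]

private lemma choose_p_sub_one {i : ℕ} (hi : i ≤ p - 1) :
    (((p-1).choose i : ℕ) : ZMod p) = (-1) ^ i := by
  have hpp : 2 ≤ p := (Fact.out : p.Prime).two_le
  induction i with
  | zero => simp
  | succ n ih =>
    have hn : n ≤ p - 1 := by omega
    have hpascal : (p-1).choose n + (p-1).choose (n+1) = p.choose (n+1) := by
      have h2 := Nat.choose_succ_succ (p-1) n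
      simp only [Nat.succ_eq_add_one] at h2
      rw [show p - 1 + 1 = p from by omega] at h2
      omega
    have hdvd : p ∣ p.choose (n+1) :=
      (Fact.out : p.Prime).dvd_choose_self (by omega) (by omega)
    have hcast : (((p-1).choose n : ℕ) : ZMod p) + (((p-1).choose (n+1) : ℕ) : ZMod p) = 0 := by
      rw [← Nat.cast_add, hpascal, (ZMod.natCast_eq_zero_iff _ _).mpr hdvd]
    rw [ih hn] at hcast
    rw [pow_succ]
    linear_combination hcast

private lemma zmod_two_ne_zero (hodd : Odd p) : (2 : ZMod p) ≠ 0 := by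
  have hpp : 2 ≤ p := (Fact.out : p.Prime).two_le
  intro h
  have h2 : ((2:ℕ) : ZMod p) = 0 := by exact_mod_cast h
  rw [ZMod.natCast_eq_zero_iff] at h2
  have := Nat.le_of_dvd (by norm_num) h2
  interval_cases p
  exact absurd hodd (by decide)

private lemma p_ge_three (hodd : Odd p) : 3 ≤ p := by
  have hpp : 2 ≤ p := (Fact.out : p.Prime).two_le
  rcases Nat.lt_or_ge p 3 with h | h
  · interval_cases p
    exact absurd hodd (by decide)
  · exact h

private lemma fermat_dvd (hodd : Odd p) : p ∣ 2 ^ (p - 1) - 1 := by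
  have h1 : 1 ≤ 2 ^ (p-1) := Nat.one_le_two_pow
  rw [← ZMod.natCast_eq_zero_iff]
  rw [Nat.cast_sub h1]
  push_cast
  rw [ZMod.pow_card_sub_one_eq_one (zmod_two_ne_zero hodd), sub_self]

private lemma sum_choose_mid : ∑ k ∈ Finset.Icc 1 (p - 1), p.choose k = 2 ^ p - 2 := by
  have hpp : 2 ≤ p := (Fact.out : p.Prime).two_le
  have h := Nat.sum_range_choose p
  have h2 : ∑ m ∈ range (p + 1), p.choose m = (∑ m ∈ range p, p.choose m) + 1 := by
    rw [Finset.sum_range_succ, Nat.choose_self]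
  have h3 : p.choose 0 + ∑ k ∈ (Finset.range p).erase 0, p.choose k
      = ∑ m ∈ range p, p.choose m :=
    Finset.add_sum_erase _ _ (mem_range.mpr (by omega))
  rw [icc_eq_erase]
  rw [Nat.choose_zero_right] at h3
  omega

private lemma cast_quot (hodd : Odd p) {k : ℕ} (h1 : 1 ≤ k) (h2 : k ≤ p - 1) :
    ((p.choose k / p : ℕ) : ZMod p) = (-1) ^ (k - 1) * ((k : ZMod p))⁻¹ := by
  have hpp : 2 ≤ p := (Fact.out : p.Prime).two_le
  have hd : p ∣ p.choose k := (Fact.out : p.Prime).dvd_choose_self (by omega) (by omega)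
  have hkey : k * (p.choose k / p) = (p-1).choose (k-1) := by
    refine Nat.eq_of_mul_eq_mul_left (show 0 < p by omega) ?_
    have hs := Nat.add_one_mul_choose_eq (p-1) (k-1)
    rw [show p - 1 + 1 = p from by omega, show k - 1 + 1 = k from by omega] at hs
    calc p * (k * (p.choose k / p)) = k * (p * (p.choose k / p)) := by ring
      _ = k * p.choose k := by rw [Nat.mul_div_cancel' hd]
      _ = p.choose k * k := by ring
      _ = p * (p-1).choose (k-1) := by rw [← hs]
  have hcast : (k : ZMod p) * ((p.choose k / p : ℕ) : ZMod p) = (-1) ^ (k-1) := by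
    rw [← Nat.cast_mul, hkey, choose_p_sub_one (by omega)]
  have hk0 : (k : ZMod p) ≠ 0 := cast_ne_zero_of_mem h1 h2
  rw [← hcast, mul_comm ((k : ZMod p)) _, mul_assoc, mul_inv_cancel₀ hk0, mul_one]

private lemma sum_quot (hodd : Odd p) :
    ∑ k ∈ Finset.Icc 1 (p - 1), (p.choose k / p) = 2 * ((2 ^ (p-1) - 1) / p) := by
  have hpp : 2 ≤ p := (Fact.out : p.Prime).two_le
  refine Nat.eq_of_mul_eq_mul_left (show 0 < p by omega) ?_
  have hL : p * ∑ k ∈ Finset.Icc 1 (p - 1), (p.choose k / p)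
      = ∑ k ∈ Finset.Icc 1 (p - 1), p.choose k := by
    rw [Finset.mul_sum]
    refine Finset.sum_congr rfl fun k hk => ?_
    obtain ⟨hk1, hk2⟩ := Finset.mem_Icc.mp hk
    exact Nat.mul_div_cancel' ((Fact.out : p.Prime).dvd_choose_self (by omega) (by omega))
  rw [hL, sum_choose_mid]
  have hq : p * ((2 ^ (p-1) - 1) / p) = 2 ^ (p-1) - 1 := Nat.mul_div_cancel' (fermat_dvd hodd)
  have hpow : 2 ^ p = 2 * 2 ^ (p-1) := by
    rw [← pow_succ']
    congr 1
    omega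
  have h1 : 1 ≤ 2 ^ (p-1) := Nat.one_le_two_pow
  have h2 : p * (2 * ((2 ^ (p-1) - 1) / p)) = 2 * (p * ((2 ^ (p-1) - 1) / p)) := by ring
  omega

private lemma inv_sum_zero (hodd : Odd p) :
    ∑ k ∈ Finset.Icc 1 (p - 1), ((k : ZMod p))⁻¹ = 0 := by
  have h3 : 3 ≤ p := p_ge_three hodd
  have hz : ∑ k ∈ Finset.Icc 1 (p - 1), ((k : ZMod p))⁻¹
      = (∑ x : ZMod p, x⁻¹) - (0 : ZMod p)⁻¹ := zsum_icc (p := p) fun x => x⁻¹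
  have hinv : (∑ x : ZMod p, x⁻¹) = ∑ x : ZMod p, x := by
    refine Finset.sum_nbij' (fun x => x⁻¹) (fun x => x⁻¹) ?_ ?_ ?_ ?_ ?_ <;>
      intro a _ <;> simp [inv_inv]
  have hx : (∑ x : ZMod p, x) = 0 := by
    have := FiniteField.sum_pow_lt_card_sub_one (ZMod p) 1 (by rw [ZMod.card]; omega)
    simpa using this
  rw [hz, hinv, hx, inv_zero, sub_zero]

private lemma neg_pow_reflect (hodd : Odd p) {a : ℕ} (h1 : 1 ≤ a) (h2 : a ≤ p - 1) :
    (-1 : ZMod p) ^ (p - a) * (((p - a : ℕ)) : ZMod p)⁻¹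
      = (-1) ^ a * ((a : ZMod p))⁻¹ := by
  have hpp : 2 ≤ p := (Fact.out : p.Prime).two_le
  have hxx : (-1 : ZMod p) ^ (p - a) = -(-1) ^ a := by
    have hx : (-1 : ZMod p) ^ (p - a) * (-1) ^ a = (-1) ^ p := by
      rw [← pow_add]
      congr 1
      omega
    have hsq : (-1 : ZMod p) ^ a * (-1) ^ a = 1 := by
      rw [← pow_add]
      exact Even.neg_one_pow ⟨a, by omega⟩
    calc (-1 : ZMod p) ^ (p - a) = (-1) ^ (p - a) * ((-1) ^ a * (-1) ^ a) := by
          rw [hsq, mul_one]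
      _ = ((-1) ^ (p - a) * (-1) ^ a) * (-1) ^ a := by ring
      _ = (-1) ^ p * (-1) ^ a := by rw [hx]
      _ = -(-1) ^ a := by rw [Odd.neg_one_pow hodd]; ring
  have hcast : (((p - a : ℕ)) : ZMod p) = -(a : ZMod p) := by
    rw [Nat.cast_sub (by omega), ZMod.natCast_self, zero_sub]
  rw [hxx, hcast, inv_neg]
  ring

private lemma reflect_sum {m : ℕ} (hodd : Odd p) (hm : p = 2 * m + 1) :
    ∑ k ∈ Finset.Icc 1 (p - 1), (-1 : ZMod p) ^ k * ((k : ZMod p))⁻¹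
      = 2 * ∑ j ∈ Finset.Icc 1 m, (-1 : ZMod p) ^ j * ((j : ZMod p))⁻¹ := by
  have hpp : 2 ≤ p := (Fact.out : p.Prime).two_le
  have hIcc : Finset.Icc 1 (p - 1) = Finset.Ico 1 p := by
    rw [← Finset.Ico_add_one_right_eq_Icc]
    congr 1
    omega
  have hIcc2 : Finset.Icc 1 m = Finset.Ico 1 (m + 1) := by
    rw [← Finset.Ico_add_one_right_eq_Icc]
  have hsplit := Finset.sum_Ico_consecutive
    (fun k => (-1 : ZMod p) ^ k * ((k : ZMod p))⁻¹)
    (show 1 ≤ m + 1 by omega) (show m + 1 ≤ p by omega)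
  have hsecond : ∑ k ∈ Finset.Ico (m+1) p, (-1 : ZMod p) ^ k * ((k : ZMod p))⁻¹
      = ∑ j ∈ Finset.Icc 1 m, (-1 : ZMod p) ^ j * ((j : ZMod p))⁻¹ := by
    refine Finset.sum_nbij' (fun k => p - k) (fun j => p - j) ?_ ?_ ?_ ?_ ?_
    · intro a ha
      simp only [Finset.mem_Ico, Finset.mem_Icc] at ha ⊢
      omega
    · intro a ha
      simp only [Finset.mem_Ico, Finset.mem_Icc] at ha ⊢
      omega
    · intro a ha
      simp only [Finset.mem_Ico] at ha
      show p - (p - a) = a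
      omega
    · intro a ha
      simp only [Finset.mem_Icc] at ha
      show p - (p - a) = a
      omega
    · intro a ha
      simp only [Finset.mem_Ico] at ha
      show (-1 : ZMod p) ^ a * ((a : ZMod p))⁻¹
        = (-1) ^ (p - a) * (((p - a : ℕ)) : ZMod p)⁻¹
      have h := neg_pow_reflect (p := p) hodd (a := p - a) (by omega) (by omega)
      rw [show p - (p - a) = a from by omega] at h
      exact h
  calc ∑ k ∈ Finset.Icc 1 (p - 1), (-1 : ZMod p) ^ k * ((k : ZMod p))⁻¹
      = ∑ k ∈ Finset.Ico 1 p, (-1 : ZMod p) ^ k * ((k : ZMod p))⁻¹ := by rw [hIcc]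
    _ = ∑ k ∈ Finset.Ico 1 (m+1), (-1 : ZMod p) ^ k * ((k : ZMod p))⁻¹
        + ∑ k ∈ Finset.Ico (m+1) p, (-1 : ZMod p) ^ k * ((k : ZMod p))⁻¹ := hsplit.symm
    _ = ∑ j ∈ Finset.Icc 1 m, (-1 : ZMod p) ^ j * ((j : ZMod p))⁻¹
        + ∑ j ∈ Finset.Icc 1 m, (-1 : ZMod p) ^ j * ((j : ZMod p))⁻¹ := by
        rw [← hIcc2, hsecond]
    _ = 2 * ∑ j ∈ Finset.Icc 1 m, (-1 : ZMod p) ^ j * ((j : ZMod p))⁻¹ := by ring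

private lemma peel {M : Type*} [AddCommMonoid M] {N : ℕ} (hN : 1 ≤ N) (f : ℕ → M) :
    ∑ j ∈ range N, f j = (∑ j ∈ range (N-1), f (j+1)) + f 0 := by
  conv_lhs => rw [show N = (N-1)+1 from by omega]
  exact Finset.sum_range_succ' f (N-1)

private lemma shift {M : Type*} [AddCommMonoid M] {N : ℕ} (hN : 1 ≤ N) (f : ℕ → M) :
    ∑ j ∈ range (N-1), f (j+1) = ∑ j ∈ Finset.Icc 1 (N-1), f j := by
  rw [show Finset.Icc 1 (N-1) = Finset.Ico 1 N from by
        rw [← Finset.Ico_add_one_right_eq_Icc]; congr 1; omega,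
    Finset.sum_Ico_eq_sum_range]
  refine Finset.sum_congr rfl fun i _ => by rw [add_comm]

end SunAux

/-- The `n`-th central Delannoy number. -/
def delannoy (n : ℕ) : ℕ := ∑ k ∈ Finset.range (n + 1), n.choose k * (n + k).choose k

theorem sun_1_2 (p : ℕ) [Fact p.Prime] (hp : Odd p) :
    ∑ k ∈ Finset.Icc 1 (p - 1), (delannoy k : ZMod p) * (k : ZMod p)⁻¹ =
      -(((2 ^ (p - 1) - 1) / p : ℤ) : ZMod p) := by
  have hpp : 2 ≤ p := (Fact.out : p.Prime).two_le
  have hp3 : 3 ≤ p := p_ge_three hp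
  have hodd : Odd p := hp
  obtain ⟨m, hm0⟩ := hp
  have hm : p = 2 * m + 1 := by omega
  have hm1 : 1 ≤ m := by omega
  -- Step A : expand delannoy and extend the inner range to `range p`
  have hdel : ∀ k ∈ Finset.Icc 1 (p-1), (delannoy k : ZMod p) * (k : ZMod p)⁻¹
      = ∑ j ∈ range p, ((k.choose j * (k+j).choose j : ℕ) : ZMod p) * (k : ZMod p)⁻¹ := by
    intro k hk
    obtain ⟨hk1, hk2⟩ := Finset.mem_Icc.mp hk
    have h1 : delannoy k = ∑ j ∈ range p, k.choose j * (k+j).choose j := by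
      rw [delannoy]
      refine Finset.sum_subset (Finset.range_subset_range.mpr (by omega)) ?_
      intro j hj hnj
      simp only [Finset.mem_range] at hj hnj
      rw [Nat.choose_eq_zero_of_lt (by omega), zero_mul]
    rw [h1, Nat.cast_sum, Finset.sum_mul]
  rw [Finset.sum_congr rfl hdel, Finset.sum_comm]
  -- Step B : peel off j = 0 and shift
  rw [peel (by omega) (fun j => ∑ k ∈ Finset.Icc 1 (p-1),
        ((k.choose j * (k+j).choose j : ℕ) : ZMod p) * (k : ZMod p)⁻¹),
      shift (by omega) (fun j => ∑ k ∈ Finset.Icc 1 (p-1),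
        ((k.choose j * (k+j).choose j : ℕ) : ZMod p) * (k : ZMod p)⁻¹)]
  -- j = 0 term vanishes
  have hT0 : ∑ k ∈ Finset.Icc 1 (p-1),
      ((k.choose 0 * (k+0).choose 0 : ℕ) : ZMod p) * (k : ZMod p)⁻¹ = 0 := by
    have h1 : ∀ k ∈ Finset.Icc 1 (p-1),
        ((k.choose 0 * (k+0).choose 0 : ℕ) : ZMod p) * (k : ZMod p)⁻¹ = (k : ZMod p)⁻¹ := by
      intro k _
      simp
    rw [Finset.sum_congr rfl h1, inv_sum_zero hodd]
  rw [hT0, add_zero]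
  -- Step C : convert each inner sum
  have hconv : ∀ j ∈ Finset.Icc 1 (p-1),
      (∑ k ∈ Finset.Icc 1 (p-1), ((k.choose j * (k+j).choose j : ℕ) : ZMod p) * (k : ZMod p)⁻¹)
      = (∑ k ∈ Finset.Icc 1 (p-1), (((k-1).choose (j-1) * (k+j).choose j : ℕ) : ZMod p))
          * ((j : ZMod p))⁻¹ := by
    intro j hj
    obtain ⟨hj1, hj2⟩ := Finset.mem_Icc.mp hj
    rw [Finset.sum_mul]
    refine Finset.sum_congr rfl fun k hk => ?_
    obtain ⟨hk1, hk2⟩ := Finset.mem_Icc.mp hk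
    have hnat : k * ((k-1).choose (j-1)) = k.choose j * j := by
      have hs := Nat.add_one_mul_choose_eq (k-1) (j-1)
      rw [show k-1+1 = k from by omega, show j-1+1 = j from by omega] at hs
      exact hs
    have hc : (k : ZMod p) * (((k-1).choose (j-1) : ℕ) : ZMod p)
        = ((k.choose j : ℕ) : ZMod p) * (j : ZMod p) := by
      rw [← Nat.cast_mul, ← Nat.cast_mul, hnat]
    have hk0 : (k : ZMod p) ≠ 0 := cast_ne_zero_of_mem hk1 hk2
    have hj0 : (j : ZMod p) ≠ 0 := cast_ne_zero_of_mem hj1 hj2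
    rw [Nat.cast_mul, Nat.cast_mul]
    field_simp
    linear_combination (-((((k+j).choose j : ℕ) : ZMod p))) * hc
  rw [Finset.sum_congr rfl hconv]
  -- Step D : evaluate the inner sums
  have hsub : Finset.Icc 1 m ⊆ Finset.Icc 1 (p-1) := by
    intro x hx
    simp only [Finset.mem_Icc] at hx ⊢
    omega
  have hzero : ∀ j ∈ Finset.Icc 1 (p-1), j ∉ Finset.Icc 1 m →
      (∑ k ∈ Finset.Icc 1 (p-1), (((k-1).choose (j-1) * (k+j).choose j : ℕ) : ZMod p))
        * ((j : ZMod p))⁻¹ = 0 := by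
    intro j hj hnj
    obtain ⟨hj1, hj2⟩ := Finset.mem_Icc.mp hj
    simp only [Finset.mem_Icc] at hnj
    have hinner : ∑ k ∈ Finset.Icc 1 (p-1),
        (((k-1).choose (j-1) * (k+j).choose j : ℕ) : ZMod p) = 0 := by
      refine Finset.sum_eq_zero fun k hk => ?_
      obtain ⟨hk1, hk2⟩ := Finset.mem_Icc.mp hk
      exact G_big_term (by omega) (by omega) hk1 hk2
    rw [hinner, zero_mul]
  have hbig : ∑ j ∈ Finset.Icc 1 (p-1),
      (∑ k ∈ Finset.Icc 1 (p-1), (((k-1).choose (j-1) * (k+j).choose j : ℕ) : ZMod p))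
        * ((j : ZMod p))⁻¹
      = ∑ j ∈ Finset.Icc 1 m, (-1 : ZMod p) ^ j * ((j : ZMod p))⁻¹ := by
    rw [← Finset.sum_subset hsub hzero]
    refine Finset.sum_congr rfl fun j hj => ?_
    obtain ⟨hj1, hj2⟩ := Finset.mem_Icc.mp hj
    rw [G_small hj1 (by omega)]
  rw [hbig]
  -- Step E : the alternating half sum is the Fermat quotient
  have hq : ((2 * ((2 ^ (p-1) - 1) / p) : ℕ) : ZMod p)
      = - ∑ k ∈ Finset.Icc 1 (p-1), (-1 : ZMod p) ^ k * ((k : ZMod p))⁻¹ := by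
    rw [← sum_quot hodd, Nat.cast_sum]
    rw [Finset.sum_congr rfl fun k hk => cast_quot hodd (Finset.mem_Icc.mp hk).1
          (Finset.mem_Icc.mp hk).2,
        ← Finset.sum_neg_distrib]
    refine Finset.sum_congr rfl fun k hk => ?_
    obtain ⟨hk1, hk2⟩ := Finset.mem_Icc.mp hk
    have : (-1 : ZMod p) ^ k = (-1) ^ (k-1) * (-1) := by
      rw [← pow_succ]
      congr 1
      omega
    rw [this]
    ring
  rw [reflect_sum hodd hm] at hq
  have hS : ∑ j ∈ Finset.Icc 1 m, (-1 : ZMod p) ^ j * ((j : ZMod p))⁻¹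
      = -(((2 ^ (p-1) - 1) / p : ℕ) : ZMod p) := by
    refine mul_left_cancel₀ (zmod_two_ne_zero hodd) ?_
    push_cast at hq
    linear_combination hq
  rw [hS]
  congr 1
  have hz : ((2 ^ (p-1) - 1 : ℕ) : ℤ) = (2 : ℤ) ^ (p-1) - 1 := by
    have h1 : 1 ≤ 2 ^ (p-1) := Nat.one_le_two_pow
    push_cast [Nat.cast_sub h1]
    ring
  have hd : (p : ℤ) * (((2 ^ (p-1) - 1) / p : ℕ) : ℤ) = 2 ^ (p-1) - 1 := by
    rw [← hz, ← Nat.cast_mul, Nat.mul_div_cancel' (fermat_dvd hodd)]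
  have hdiv : ((2 ^ (p - 1) - 1) / p : ℤ) = (((2 ^ (p-1) - 1) / p : ℕ) : ℤ) := by
    rw [← hd, Int.mul_ediv_cancel_left _ (by exact_mod_cast (show p ≠ 0 by omega))]
  rw [hdiv, Int.cast_natCast]
end

section
/- Let p be an odd prime and m an integer not divisible by p. Then $\sum_{k=1}^{p-1} \frac{S_k}{m^k} \equiv \frac{m^2-6m+1}{2m}\left(1 - \left(\frac{m^2-6m+1}{p}\right)\right) \pmod{p}$, where $1/m^k$ and $1/(2m)$ denote inverses mod p, and $(\frac{\cdot}{p})$ is the Legendre symbol (taking value 0 when p divides the argument). -/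
open Finset

/-- The `k`-th (large) Schröder number. -/
def schroeder (k : ℕ) : ℕ := ∑ j ∈ Finset.range (k + 1), (k + j).choose (2 * j) * catalan j

variable {p : ℕ} [Fact p.Prime]

lemma fact_ne_zero_s14 {b : ℕ} (hb : b < p) : ((b.factorial : ℕ) : ZMod p) ≠ 0 := by
  rw [Ne, ZMod.natCast_eq_zero_iff]
  intro h
  have := (Nat.Prime.dvd_factorial (Fact.out : p.Prime)).mp h
  omega

lemma choose_vanish {n k : ℕ} (h1 : k < p) (h2 : n - k < p) (hn : p ≤ n) :
    ((n.choose k : ℕ) : ZMod p) = 0 := by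
  rw [ZMod.natCast_eq_zero_iff]
  exact Nat.Prime.dvd_choose (Fact.out) h1 h2 hn

lemma neg_choose (a b : ℕ) (hab : a + b ≤ p - 1) :
    (((p - 1 - a).choose b : ℕ) : ZMod p) = (-1) ^ b * ((a + b).choose b : ℕ) := by
  have hp : 1 ≤ p := (Fact.out : p.Prime).one_lt.le
  have hbp : b < p := by omega
  have key : (((p - 1 - a).descFactorial b : ℕ) : ZMod p)
      = (-1) ^ b * (((a + b).descFactorial b : ℕ) : ZMod p) := by
    rw [Nat.descFactorial_eq_prod_range, Nat.descFactorial_eq_prod_range]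
    push_cast
    rw [← Finset.prod_range_reflect (fun i => ((a + b - i : ℕ) : ZMod p)) b]
    rw [show ((-1 : ZMod p)) ^ b = ∏ _i ∈ range b, (-1 : ZMod p) by simp, ← Finset.prod_mul_distrib]
    apply Finset.prod_congr rfl
    intro i hi
    rw [Finset.mem_range] at hi
    have h1 : i ≤ p - 1 - a := by omega
    have h2 : b - 1 - i ≤ a + b := by omega
    rw [Nat.cast_sub h1, Nat.cast_sub h2]
    have : ((p : ℕ) : ZMod p) = 0 := ZMod.natCast_self p
    have hcast : ((p - 1 - a : ℕ) : ZMod p) = ((p:ℕ) : ZMod p) - 1 - a := by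
      have : p - 1 - a = p - (1 + a) := by omega
      rw [this, Nat.cast_sub (by omega : 1 + a ≤ p)]
      push_cast; ring
    rw [hcast, this]
    have hcast2 : ((b - 1 - i : ℕ) : ZMod p) = (b : ZMod p) - 1 - i := by
      have : b - 1 - i = b - (1 + i) := by omega
      rw [this, Nat.cast_sub (by omega : 1 + i ≤ b)]
      push_cast; ring
    rw [hcast2]
    push_cast
    ring
  have e1 := Nat.descFactorial_eq_factorial_mul_choose (p - 1 - a) b
  have e2 := Nat.descFactorial_eq_factorial_mul_choose (a + b) b
  have := key
  rw [e1, e2] at this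
  push_cast at this
  have hf := fact_ne_zero_s14 (p := p) hbp
  exact mul_left_cancel₀ hf (by linear_combination this)

lemma centralBinom_eq (hp : Odd p) {j : ℕ} (hj : j ≤ p / 2) :
    ((Nat.centralBinom j : ℕ) : ZMod p) = (-4 : ZMod p) ^ j * ((p / 2).choose j : ℕ) := by
  induction j with
  | zero => simp [Nat.centralBinom]
  | succ n ih =>
    have hn : n ≤ p / 2 := by omega
    have hp3 : 3 ≤ p := by
      have := (Fact.out : p.Prime).two_le
      rcases hp with ⟨t, ht⟩; omega
    have hinv : ((n + 1 : ℕ) : ZMod p) ≠ 0 := by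
      rw [Ne, ZMod.natCast_eq_zero_iff]
      intro h
      have := Nat.le_of_dvd (by omega) h
      omega
    apply mul_left_cancel₀ hinv
    have e1 : ((n + 1) * Nat.centralBinom (n + 1) : ℕ) = (2 * (2 * n + 1) * Nat.centralBinom n : ℕ) :=
      Nat.succ_mul_centralBinom_succ n
    have e2 : (p / 2).choose (n + 1) * (n + 1) = (p / 2).choose n * (p / 2 - n) :=
      Nat.choose_succ_right_eq (p / 2) n
    have e1' : ((n:ZMod p) + 1) * (Nat.centralBinom (n + 1) : ℕ) = 2 * (2 * n + 1) * (Nat.centralBinom n : ℕ) := by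
      exact_mod_cast congrArg (Nat.cast : ℕ → ZMod p) e1
    have e2' : ((p / 2).choose (n + 1) : ZMod p) * ((n:ZMod p) + 1) = ((p / 2).choose n : ℕ) * ((p / 2 - n : ℕ) : ZMod p) := by
      exact_mod_cast congrArg (Nat.cast : ℕ → ZMod p) e2
    have hsub : ((p / 2 - n : ℕ) : ZMod p) = ((p / 2 : ℕ) : ZMod p) - n := by
      rw [Nat.cast_sub hn]
    have hhalf : (2 : ZMod p) * ((p / 2 : ℕ) : ZMod p) = -1 := by
      have : (2 * (p / 2) + 1 : ℕ) = p := by rcases hp with ⟨t, ht⟩; omega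
      have hc : ((2 * (p / 2) + 1 : ℕ) : ZMod p) = ((p : ℕ) : ZMod p) := by rw [this]
      rw [ZMod.natCast_self] at hc
      push_cast at hc
      linear_combination hc
    push_cast at e1' e2' ⊢
    rw [ih hn] at e1'
    calc ((n:ZMod p) + 1) * ((Nat.centralBinom (n + 1) : ℕ) : ZMod p)
        = 2 * (2 * n + 1) * ((-4 : ZMod p) ^ n * ((p / 2).choose n : ℕ)) := e1'
      _ = ((n:ZMod p) + 1) * ((-4) ^ (n + 1) * ((p / 2).choose (n + 1) : ℕ)) := by
          have : ((n:ZMod p) + 1) * ((-4) ^ (n + 1) * ((p / 2).choose (n + 1) : ℕ))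
              = (-4) ^ (n+1) * (((p / 2).choose (n + 1) : ZMod p) * ((n:ZMod p) + 1)) := by ring
          rw [this, e2', hsub]
          have h4 : (-4 : ZMod p) * (((p / 2 : ℕ) : ZMod p) - n) = 2 * (2 * n + 1) := by
            have := hhalf
            linear_combination (-2 : ZMod p) * hhalf
          calc 2 * (2 * (n:ZMod p) + 1) * ((-4 : ZMod p) ^ n * ((p / 2).choose n : ℕ))
              = (-4)^n * ((-4) * (((p / 2:ℕ):ZMod p) - n)) * ((p / 2).choose n : ℕ) := by
                rw [h4]; ring
            _ = (-4) ^ (n + 1) * (((p / 2).choose n : ZMod p) * (((p / 2:ℕ):ZMod p) - n)) := by ring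

lemma two_half (hp : Odd p) : (2 : ZMod p) * ((p / 2 + 1 : ℕ) : ZMod p) = 1 := by
  have h : (2 * (p / 2 + 1) : ℕ) = p + 1 := by rcases hp with ⟨t, ht⟩; omega
  have : ((2 * (p / 2 + 1) : ℕ) : ZMod p) = ((p + 1 : ℕ) : ZMod p) := by rw [h]
  push_cast [ZMod.natCast_self] at this
  push_cast
  linear_combination this

lemma catalan_eq (hp : Odd p) {j : ℕ} (hj : j ≤ p / 2) :
    ((catalan j : ℕ) : ZMod p) = (-1) ^ j * 2 * 4 ^ j * ((p / 2 + 1).choose (j + 1) : ℕ) := by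
  have hp3 : 3 ≤ p := by
    have := (Fact.out : p.Prime).two_le
    rcases hp with ⟨t, ht⟩; omega
  have hinv : ((j + 1 : ℕ) : ZMod p) ≠ 0 := by
    rw [Ne, ZMod.natCast_eq_zero_iff]
    intro h
    have := Nat.le_of_dvd (by omega) h
    omega
  apply mul_left_cancel₀ hinv
  have e1 : ((j + 1) * catalan j : ℕ) = (Nat.centralBinom j : ℕ) :=
    succ_mul_catalan_eq_centralBinom j
  have e2 : (p / 2 + 1) * (p / 2).choose j = (p / 2 + 1).choose (j + 1) * (j + 1) :=
    Nat.add_one_mul_choose_eq (p / 2) j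
  have e1' : ((j:ZMod p) + 1) * ((catalan j : ℕ) : ZMod p) = ((Nat.centralBinom j : ℕ) : ZMod p) := by
    exact_mod_cast congrArg (Nat.cast : ℕ → ZMod p) e1
  have e2' : (((p / 2 + 1 : ℕ) : ZMod p)) * ((p / 2).choose j : ℕ) = (((p / 2 + 1).choose (j + 1) : ℕ) : ZMod p) * ((j:ZMod p) + 1) := by
    exact_mod_cast congrArg (Nat.cast : ℕ → ZMod p) e2
  have hh := two_half (p := p) hp
  rw [centralBinom_eq hp hj] at e1'
  push_cast at e1' e2' ⊢
  calc ((j:ZMod p) + 1) * ((catalan j : ℕ) : ZMod p)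
      = (-4 : ZMod p) ^ j * ((p / 2).choose j : ℕ) := e1'
    _ = (-1)^j * 4^j * (2 * ((p / 2 + 1 : ℕ) : ZMod p)) * ((p / 2).choose j : ℕ) := by
        rw [hh]; rw [neg_pow]; push_cast; ring
    _ = (-1)^j * 4^j * 2 * ((((p / 2 + 1 : ℕ) : ZMod p)) * ((p / 2).choose j : ℕ)) := by ring
    _ = (-1)^j * 4^j * 2 * ((((p / 2 + 1).choose (j + 1) : ℕ) : ZMod p) * ((j:ZMod p) + 1)) := by
        rw [show ((((p / 2 + 1 : ℕ) : ZMod p)) * ((p / 2).choose j : ℕ) : ZMod p) = (((p / 2 + 1).choose (j + 1) : ℕ) : ZMod p) * ((j:ZMod p) + 1) by push_cast at e2' ⊢; linear_combination e2']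
    _ = ((j:ZMod p) + 1) * ((-1) ^ j * 2 * 4 ^ j * (((p / 2 + 1).choose (j + 1) : ℕ) : ZMod p)) := by
        ring

lemma catalan_vanish {j : ℕ} (hj : p / 2 < j) (hj2 : j < p - 1) :
    ((catalan j : ℕ) : ZMod p) = 0 := by
  have hp2 := (Fact.out : p.Prime).two_le
  have hinv : ((j + 1 : ℕ) : ZMod p) ≠ 0 := by
    rw [Ne, ZMod.natCast_eq_zero_iff]
    intro h
    have := Nat.le_of_dvd (by omega) h
    omega
  apply mul_left_cancel₀ hinv
  have e1 : ((j + 1) * catalan j : ℕ) = ((2 * j).choose j : ℕ) := by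
    rw [succ_mul_catalan_eq_centralBinom]; rfl
  have e1' : ((j:ZMod p) + 1) * ((catalan j : ℕ) : ZMod p) = (((2 * j).choose j : ℕ) : ZMod p) := by
    exact_mod_cast congrArg (Nat.cast : ℕ → ZMod p) e1
  push_cast at e1' ⊢
  rw [e1', choose_vanish (by omega) (by omega) (by omega), mul_zero]

lemma catalan_sub (n : ℕ) : catalan n = (2 * n).choose n - (2 * n).choose (n + 1) := by
  have hle : (2 * n).choose (n + 1) ≤ (2 * n).choose n := by
    have := Nat.choose_le_middle (n + 1) (2 * n)
    simpa [Nat.mul_div_cancel_left n (by norm_num : 0 < 2)] using this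
  have key : (n + 1) * catalan n = (n + 1) * ((2 * n).choose n - (2 * n).choose (n + 1)) := by
    rw [succ_mul_catalan_eq_centralBinom]
    have e := Nat.choose_succ_right_eq (2 * n) n
    have : 2 * n - n = n := by omega
    rw [this] at e
    have : (n + 1) * ((2 * n).choose n - (2 * n).choose (n + 1))
        = (n + 1) * (2 * n).choose n - (n + 1) * (2 * n).choose (n + 1) := by
      exact Nat.mul_sub ..
    rw [this]
    have e' : (n + 1) * (2 * n).choose (n + 1) = n * (2 * n).choose n := by
      rw [mul_comm (n + 1), e, mul_comm]
    rw [e']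
    have : (n + 1) * (2 * n).choose n - n * (2 * n).choose n = (2 * n).choose n := by
      have : (n + 1) * (2 * n).choose n = n * (2 * n).choose n + (2 * n).choose n := by ring
      omega
    rw [this]; rfl
  exact Nat.eq_of_mul_eq_mul_left (by omega) key

lemma catalan_last (hp : Odd p) : ((catalan (p - 1) : ℕ) : ZMod p) = -1 := by
  have hp3 : 3 ≤ p := by
    have := (Fact.out : p.Prime).two_le
    rcases hp with ⟨t, ht⟩; omega
  rw [catalan_sub]
  have hle : (2 * (p - 1)).choose (p - 1 + 1) ≤ (2 * (p - 1)).choose (p - 1) := by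
    have := Nat.choose_le_middle (p - 1 + 1) (2 * (p - 1))
    simpa [Nat.mul_div_cancel_left (p - 1) (by norm_num : 0 < 2)] using this
  rw [Nat.cast_sub hle]
  have h1 : (((2 * (p - 1)).choose (p - 1) : ℕ) : ZMod p) = 0 :=
    choose_vanish (by omega) (by omega) (by omega)
  have h2 : (((2 * (p - 1)).choose (p - 1 + 1) : ℕ) : ZMod p) = 1 := by
    have lucas := Choose.choose_modEq_choose_mod_mul_choose_div
      (n := 2 * (p - 1)) (k := p - 1 + 1) (p := p)
    have hsplit : 2 * (p - 1) = p - 2 + p := by omega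
    have e1 : (2 * (p - 1)) % p = p - 2 := by
      rw [hsplit, Nat.add_mod_right, Nat.mod_eq_of_lt (by omega)]
    have e2 : (2 * (p - 1)) / p = 1 := by
      rw [hsplit, Nat.add_div_right _ (by omega), Nat.div_eq_of_lt (by omega)]
    have e3 : (p - 1 + 1) % p = 0 := by
      rw [show p - 1 + 1 = p by omega, Nat.mod_self]
    have e4 : (p - 1 + 1) / p = 1 := by
      rw [show p - 1 + 1 = p by omega, Nat.div_self (by omega)]
    rw [e1, e2, e3, e4] at lucas
    simp only [Nat.choose_zero_right, Nat.choose_self, one_mul, mul_one] at lucas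
    have lucas' : (((2 * (p - 1)).choose (p - 1 + 1) : ℤ) : ZMod p) = ((1 : ℤ) : ZMod p) := by
      rw [ZMod.intCast_eq_intCast_iff]
      exact_mod_cast lucas
    exact_mod_cast lucas'
  rw [h1, h2]
  ring

lemma A_eval (hp : Odd p) {j : ℕ} (hj : j ≤ p / 2) (t : ZMod p) :
    ∑ k ∈ range p, (((k + j).choose (2 * j) : ℕ) : ZMod p) * t ^ k
      = t ^ j * (1 - t) ^ (p - 1 - 2 * j) := by
  have hp3 : 3 ≤ p := by
    have := (Fact.out : p.Prime).two_le
    rcases hp with ⟨t, ht⟩; omega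
  have h2j : 2 * j ≤ p - 1 := by rcases hp with ⟨s, hs⟩; omega
  have step1 : ∑ k ∈ range p, (((k + j).choose (2 * j) : ℕ) : ZMod p) * t ^ k
      = ∑ k ∈ Ico j (p - j), (((k + j).choose (2 * j) : ℕ) : ZMod p) * t ^ k := by
    refine (Finset.sum_subset (fun x hx => ?_) (fun x hx hx2 => ?_)).symm
    · rw [Finset.mem_Ico] at hx
      rw [Finset.mem_range]; omega
    · rw [Finset.mem_range] at hx
      rw [Finset.mem_Ico, not_and_or, not_le, not_lt] at hx2
      rcases hx2 with h | h
      · rw [Nat.choose_eq_zero_of_lt (by omega), Nat.cast_zero, zero_mul]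
      · rw [choose_vanish (by omega) (by omega) (by omega), zero_mul]
  rw [step1, Finset.sum_Ico_eq_sum_range]
  have hrange : p - j - j = p - 1 - 2 * j + 1 := by omega
  rw [hrange]
  have hexp : (1 - t) ^ (p - 1 - 2 * j) = ∑ i ∈ range (p - 1 - 2 * j + 1),
      (-t) ^ i * ((p - 1 - 2 * j).choose i : ℕ) := by
    have := add_pow (-t) 1 (p - 1 - 2 * j)
    simp only [one_pow, mul_one] at this
    rw [show (1 : ZMod p) - t = -t + 1 by ring, this]
  rw [hexp, Finset.mul_sum]
  apply Finset.sum_congr rfl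
  intro i hi
  rw [Finset.mem_range] at hi
  have hsym : ((j + i + j).choose (2 * j) : ℕ) = (2 * j + i).choose i := by
    rw [show j + i + j = 2 * j + i by omega, ← Nat.choose_symm (by omega : i ≤ 2 * j + i)]
    congr 1
    omega
  have hneg := neg_choose (p := p) (2 * j) i (by omega)
  have hsq : ((-1 : ZMod p)) ^ i * (-1) ^ i = 1 := by
    rw [← mul_pow]; norm_num
  rw [hsym, hneg, neg_pow t i]
  rw [show 2 * j + i = 2 * j + i by rfl]
  linear_combination (-(t ^ j * t ^ i) * (((2 * j + i).choose i : ℕ) : ZMod p)) * hsq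

lemma A_last (t : ZMod p) :
    ∑ k ∈ range p, (((k + (p - 1)).choose (2 * (p - 1)) : ℕ) : ZMod p) * t ^ k
      = t ^ (p - 1) := by
  have hp2 := (Fact.out : p.Prime).two_le
  rw [Finset.sum_eq_single (p - 1)]
  · rw [show p - 1 + (p - 1) = 2 * (p - 1) by omega, Nat.choose_self, Nat.cast_one, one_mul]
  · intro k hk hk2
    rw [Finset.mem_range] at hk
    rw [Nat.choose_eq_zero_of_lt (by omega), Nat.cast_zero, zero_mul]
  · intro h
    exact absurd (Finset.mem_range.mpr (by omega)) h

theorem sun_1_11 (p : ℕ) [Fact p.Prime] (hp : Odd p) (m : ℤ) (hm : ¬ (p : ℤ) ∣ m) :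
    ∑ k ∈ Finset.Icc 1 (p - 1), (schroeder k : ZMod p) * ((m : ZMod p) ^ k)⁻¹ =
      ((m ^ 2 - 6 * m + 1 : ℤ) : ZMod p) * ((2 * m : ZMod p))⁻¹ *
        (1 - (legendreSym p (m ^ 2 - 6 * m + 1) : ZMod p)) := by
  have hp3 : 3 ≤ p := by
    have := (Fact.out : p.Prime).two_le
    rcases hp with ⟨s, hs⟩; omega
  have hph : p = 2 * (p / 2) + 1 := by rcases hp with ⟨s, hs⟩; omega
  set M : ZMod p := (m : ZMod p) with hMdef
  have hM : M ≠ 0 := by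
    rw [hMdef, Ne, ZMod.intCast_zmod_eq_zero_iff_dvd]
    exact hm
  set t : ZMod p := M⁻¹ with htdef
  have ht : t ≠ 0 := inv_ne_zero hM
  have htM : M * t = 1 := mul_inv_cancel₀ hM
  have h2 : (2 : ZMod p) ≠ 0 := by
    have h2' : ((2 : ℕ) : ZMod p) ≠ 0 := by
      rw [Ne, ZMod.natCast_eq_zero_iff]
      intro h
      have := Nat.le_of_dvd (by omega) h
      omega
    exact_mod_cast h2'
  set a : ZMod p := ((m ^ 2 - 6 * m + 1 : ℤ) : ZMod p) with hadef
  have ha : a = M ^ 2 - 6 * M + 1 := by rw [hadef, hMdef]; push_cast; ring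
  set ε : ZMod p := (legendreSym p (m ^ 2 - 6 * m + 1) : ZMod p) with hεdef
  have hε : ε = a ^ (p / 2) := by rw [hεdef, hadef, legendreSym.eq_pow]
  have hlhs : ∀ k : ℕ, (schroeder k : ZMod p) * ((M : ZMod p) ^ k)⁻¹
      = (schroeder k : ZMod p) * t ^ k := by
    intro k
    rw [htdef, inv_pow]
  simp only [hlhs]
  -- Step A : extend to range p
  have hins : Finset.range p = insert 0 (Finset.Icc 1 (p - 1)) := by
    ext x
    simp only [Finset.mem_range, Finset.mem_insert, Finset.mem_Icc]
    omega
  have hS0 : (schroeder 0 : ZMod p) * t ^ 0 = 1 := by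
    have h0 : schroeder 0 = 1 := by simp [schroeder]
    rw [h0]; simp
  have stepA : ∑ k ∈ Finset.range p, (schroeder k : ZMod p) * t ^ k
      = 1 + ∑ k ∈ Finset.Icc 1 (p - 1), (schroeder k : ZMod p) * t ^ k := by
    rw [hins, Finset.sum_insert (by simp), hS0]
  -- Step B : swap sums
  have stepB : ∑ k ∈ Finset.range p, (schroeder k : ZMod p) * t ^ k
      = ∑ j ∈ Finset.range p, (catalan j : ZMod p) *
          ∑ k ∈ Finset.range p, (((k + j).choose (2 * j) : ℕ) : ZMod p) * t ^ k := by
    have e1 : ∀ k ∈ Finset.range p, (schroeder k : ZMod p) * t ^ k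
        = ∑ j ∈ Finset.range p, (((k + j).choose (2 * j) : ℕ) : ZMod p)
            * (catalan j : ZMod p) * t ^ k := by
      intro k hk
      rw [Finset.mem_range] at hk
      have hs : (schroeder k : ZMod p)
          = ∑ j ∈ Finset.range (k + 1), (((k + j).choose (2 * j) : ℕ) : ZMod p)
              * (catalan j : ZMod p) := by
        rw [schroeder]
        push_cast
        rfl
      rw [hs, Finset.sum_mul]
      refine Finset.sum_subset (fun x hx => ?_) (fun x hx hx2 => ?_)
      · rw [Finset.mem_range] at hx ⊢
        omega
      · rw [Finset.mem_range] at hx hx2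
        rw [Nat.choose_eq_zero_of_lt (by omega), Nat.cast_zero, zero_mul, zero_mul]
    rw [Finset.sum_congr rfl e1, Finset.sum_comm]
    apply Finset.sum_congr rfl
    intro j hj
    rw [Finset.mul_sum]
    apply Finset.sum_congr rfl
    intro k hk
    ring
  -- splitting the j-range
  have split_sum : ∀ g : ℕ → ZMod p, ∑ j ∈ Finset.range p, g j
      = (∑ j ∈ Finset.range (p / 2 + 1), g j)
        + ((∑ j ∈ Finset.Ico (p / 2 + 1) (p - 1), g j) + g (p - 1)) := by
    intro g
    rw [Finset.range_eq_Ico,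
      ← Finset.sum_Ico_consecutive g (Nat.zero_le (p / 2 + 1)) (by omega : p / 2 + 1 ≤ p),
      ← Finset.range_eq_Ico]
    congr 1
    have e : Finset.Ico (p / 2 + 1) p = Finset.Ico (p / 2 + 1) ((p - 1) + 1) := by
      congr 1
      omega
    rw [e, Finset.sum_Ico_succ_top (by omega)]
  have stepC : ∑ j ∈ Finset.range p, (catalan j : ZMod p) *
          ∑ k ∈ Finset.range p, (((k + j).choose (2 * j) : ℕ) : ZMod p) * t ^ k
      = (∑ j ∈ Finset.range (p / 2 + 1), (catalan j : ZMod p) * (t ^ j * (1 - t) ^ (p - 1 - 2 * j))) - 1 := by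
    rw [split_sum (fun j => (catalan j : ZMod p) *
          ∑ k ∈ Finset.range p, (((k + j).choose (2 * j) : ℕ) : ZMod p) * t ^ k)]
    have hmid : ∑ j ∈ Finset.Ico (p / 2 + 1) (p - 1), ((catalan j : ZMod p) *
          ∑ k ∈ Finset.range p, (((k + j).choose (2 * j) : ℕ) : ZMod p) * t ^ k) = 0 := by
      apply Finset.sum_eq_zero
      intro j hj
      rw [Finset.mem_Ico] at hj
      rw [catalan_vanish (by omega) (by omega), zero_mul]
    have hlast : ((catalan (p - 1) : ZMod p) *
          ∑ k ∈ Finset.range p, (((k + (p - 1)).choose (2 * (p - 1)) : ℕ) : ZMod p) * t ^ k) = -1 := by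
      rw [catalan_last hp, A_last, ZMod.pow_card_sub_one_eq_one ht]
      ring
    have hlow : ∀ j ∈ Finset.range (p / 2 + 1), ((catalan j : ZMod p) *
          ∑ k ∈ Finset.range p, (((k + j).choose (2 * j) : ℕ) : ZMod p) * t ^ k)
        = (catalan j : ZMod p) * (t ^ j * (1 - t) ^ (p - 1 - 2 * j)) := by
      intro j hj
      rw [Finset.mem_range] at hj
      rw [A_eval hp (by omega) t]
    rw [Finset.sum_congr rfl hlow, hmid, hlast]
    ring
  -- Step D/E : evaluate the remaining sum
  have key : (-2 * t) * ∑ j ∈ Finset.range (p / 2 + 1),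
        (catalan j : ZMod p) * (t ^ j * (1 - t) ^ (p - 1 - 2 * j))
      = (t ^ 2 - 6 * t + 1) ^ (p / 2 + 1) - (1 - t) ^ 2 := by
    have hbin := add_pow (-(4 * t)) ((1 - t) ^ 2) (p / 2 + 1)
    rw [Finset.sum_range_succ'] at hbin
    rw [show (-(4 * t) + (1 - t) ^ 2 : ZMod p) = t ^ 2 - 6 * t + 1 by ring] at hbin
    have hg0 : (-(4 * t)) ^ 0 * ((1 - t) ^ 2) ^ (p / 2 + 1 - 0) * (((p / 2 + 1).choose 0 : ℕ) : ZMod p)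
        = (1 - t) ^ 2 := by
      simp only [pow_zero, one_mul, Nat.choose_zero_right, Nat.cast_one, mul_one]
      rw [← pow_mul, show 2 * (p / 2 + 1 - 0) = p + 1 by omega, pow_succ, ZMod.pow_card]
      ring
    have hterm : ∀ j ∈ Finset.range (p / 2 + 1),
        (-2 * t) * ((catalan j : ZMod p) * (t ^ j * (1 - t) ^ (p - 1 - 2 * j)))
        = (-(4 * t)) ^ (j + 1) * ((1 - t) ^ 2) ^ (p / 2 + 1 - (j + 1)) * (((p / 2 + 1).choose (j + 1) : ℕ) : ZMod p) := by
      intro j hj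
      rw [Finset.mem_range] at hj
      rw [catalan_eq hp (by omega)]
      rw [show ((1 - t) ^ 2) ^ (p / 2 + 1 - (j + 1)) = (1 - t) ^ (p - 1 - 2 * j) by
        rw [← pow_mul]; congr 1; omega]
      have hnp : (-(4 * t) : ZMod p) ^ (j + 1) = ((-1 : ZMod p)) ^ j * (-1) * (4 ^ j * 4) * (t ^ j * t) := by
        rw [show (-(4 * t) : ZMod p) = (-1) * 4 * t by ring, mul_pow, mul_pow,
          pow_succ (-1 : ZMod p), pow_succ (4 : ZMod p), pow_succ t]
      rw [hnp]
      ring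
    calc (-2 * t) * ∑ j ∈ Finset.range (p / 2 + 1),
          (catalan j : ZMod p) * (t ^ j * (1 - t) ^ (p - 1 - 2 * j))
        = ∑ j ∈ Finset.range (p / 2 + 1), (-2 * t) *
            ((catalan j : ZMod p) * (t ^ j * (1 - t) ^ (p - 1 - 2 * j))) := Finset.mul_sum ..
      _ = ∑ j ∈ Finset.range (p / 2 + 1),
            (-(4 * t)) ^ (j + 1) * ((1 - t) ^ 2) ^ (p / 2 + 1 - (j + 1)) * (((p / 2 + 1).choose (j + 1) : ℕ) : ZMod p) :=
          Finset.sum_congr rfl hterm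
      _ = (t ^ 2 - 6 * t + 1) ^ (p / 2 + 1) - (1 - t) ^ 2 := by
          linear_combination - hbin - hg0
  -- put everything together
  have hfac : (-2 * t : ZMod p) ≠ 0 := by
    intro h
    apply ht
    have hne : (-2 : ZMod p) ≠ 0 := by
      intro h'
      apply h2
      linear_combination -h'
    exact (mul_eq_zero.mp h).resolve_left hne
  apply mul_left_cancel₀ hfac
  have hLHS : ∑ k ∈ Finset.Icc 1 (p - 1), (schroeder k : ZMod p) * t ^ k
      = (∑ j ∈ Finset.range (p / 2 + 1), (catalan j : ZMod p) * (t ^ j * (1 - t) ^ (p - 1 - 2 * j))) - 2 := by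
    have h := stepA
    rw [stepB, stepC] at h
    linear_combination -h
  rw [hLHS, mul_sub, key]
  -- now pure algebra
  have hat : t ^ 2 - 6 * t + 1 = a * t ^ 2 := by
    rw [ha]
    linear_combination (-t * M + 6 * t - 1) * htM
  have hpow : (t ^ 2 - 6 * t + 1) ^ (p / 2 + 1) = a * ε * t ^ 2 := by
    rw [hat, mul_pow, pow_succ a, ← pow_mul]
    have h1 : t ^ (2 * (p / 2 + 1)) = t * t := by
      rw [show 2 * (p / 2 + 1) = p + 1 by omega, pow_succ, ZMod.pow_card]
    rw [h1, hε]
    ring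
  rw [hpow]
  have hinv2M : ((2 * m : ZMod p)) = 2 * M := by push_cast [hMdef]; ring
  rw [hinv2M, mul_inv, ← htdef]
  have h2inv : (2 : ZMod p) * (2 : ZMod p)⁻¹ = 1 := mul_inv_cancel₀ h2
  linear_combination (a * t ^ 2 * (1 - ε)) * h2inv - hat
end

section
/- Let p be an odd prime and m an integer not divisible by p. Then $\sum_{k=1}^{p-1} \frac{C_k}{m^k} \equiv \frac{m-4}{2}\left(1 - \left(\frac{m(m-4)}{p}\right)\right) \pmod{p}$, where $1/m^k$ and $1/2$ denote inverses mod p and $(\frac{\cdot}{p})$ is the Legendre symbol (0 if p divides the argument). -/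
open Finset

lemma catalan_rel (k : ℕ) : 2 * catalan k + Nat.centralBinom (k + 1) = 4 * Nat.centralBinom k := by
  have h1 := succ_mul_catalan_eq_centralBinom k
  have h2 := Nat.succ_mul_centralBinom_succ k
  apply Nat.eq_of_mul_eq_mul_left (Nat.succ_pos k)
  zify at h1 h2 ⊢
  linear_combination 2 * h1 + h2

lemma cB_cong (p : ℕ) [Fact p.Prime] (hp : Odd p) (k : ℕ) (hk : k < p) :
    (Nat.centralBinom k : ZMod p) = (-4) ^ k * ((p / 2).choose k : ZMod p) := by
  induction k with
  | zero => simp [Nat.centralBinom]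
  | succ k ih =>
    have hk' : k < p := Nat.lt_of_succ_lt hk
    have ih' := ih hk'
    have hne : ((k + 1 : ℕ) : ZMod p) ≠ 0 := by
      rw [Ne, ZMod.natCast_eq_zero_iff]
      exact fun h => absurd (Nat.le_of_dvd (Nat.succ_pos k) h) (not_le.mpr hk)
    apply mul_left_cancel₀ hne
    have key : ((k + 1 : ℕ) : ZMod p) * (Nat.centralBinom (k + 1) : ZMod p)
        = 2 * (2 * (k : ZMod p) + 1) * (Nat.centralBinom k : ZMod p) := by
      have h0 := Nat.succ_mul_centralBinom_succ k
      have h1 : (((k + 1) * Nat.centralBinom (k + 1) : ℕ) : ZMod p)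
          = ((2 * (2 * k + 1) * Nat.centralBinom k : ℕ) : ZMod p) := by rw [h0]
      push_cast at h1 ⊢
      linear_combination h1
    rw [key, ih']
    have hodd := Nat.odd_iff.mp hp
    have hhp : (2 * (p / 2) + 1 : ℕ) = p := by omega
    have hh0 : (2 : ZMod p) * ((p / 2 : ℕ) : ZMod p) + 1 = 0 := by
      have h2 : ((2 * (p / 2) + 1 : ℕ) : ZMod p) = ((p : ℕ) : ZMod p) := by rw [hhp]
      rw [ZMod.natCast_self, Nat.cast_add, Nat.cast_mul, Nat.cast_one, Nat.cast_ofNat] at h2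
      linear_combination h2
    by_cases hc : k ≤ p / 2
    · have hnat := Nat.choose_succ_right_eq (p / 2) k
      have hcast : ((p / 2).choose (k + 1) : ZMod p) * ((k : ZMod p) + 1)
          = ((p / 2).choose k : ZMod p) * (((p / 2 : ℕ) : ZMod p) - (k : ZMod p)) := by
        have h3 : (((p / 2).choose (k + 1) * (k + 1) : ℕ) : ZMod p)
            = (((p / 2).choose k * (p / 2 - k) : ℕ) : ZMod p) := by rw [hnat]
        push_cast [Nat.cast_sub hc] at h3
        linear_combination h3
      push_cast
      linear_combination (-1 : ZMod p) * (-4 : ZMod p) ^ (k + 1) * hcast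
        + 2 * (-4 : ZMod p) ^ k * ((p / 2).choose k : ZMod p) * hh0
    · push_neg at hc
      rw [Nat.choose_eq_zero_of_lt hc, Nat.choose_eq_zero_of_lt (Nat.lt_succ_of_lt hc)]
      push_cast
      ring

lemma cB_p (p : ℕ) [Fact p.Prime] : (Nat.centralBinom p : ZMod p) = 2 := by
  have hp1 : 0 < p := (Fact.out : p.Prime).pos
  have h := @Choose.choose_modEq_choose_mod_mul_choose_div (2 * p) p p _
  have e1 : 2 * p % p = 0 := Nat.mul_mod_left 2 p
  have e2 : 2 * p / p = 2 := by rw [mul_comm]; exact Nat.mul_div_cancel_left 2 hp1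
  have e3 : p % p = 0 := Nat.mod_self p
  have e4 : p / p = 1 := Nat.div_self hp1
  rw [e1, e2, e3, e4] at h
  have h2 := (ZMod.intCast_eq_intCast_iff _ _ _).mpr h
  push_cast at h2
  rw [Nat.centralBinom, h2]
  norm_num

theorem sun_2_1 (p : ℕ) [Fact p.Prime] (hp : Odd p) (m : ℤ) (hm : ¬ (p : ℤ) ∣ m) :
    ∑ k ∈ Finset.Icc 1 (p - 1), (catalan k : ZMod p) * ((m : ZMod p) ^ k)⁻¹ =
      ((m - 4 : ℤ) : ZMod p) * (2 : ZMod p)⁻¹ *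
        (1 - (legendreSym p (m * (m - 4)) : ZMod p)) := by
  have hprime : p.Prime := Fact.out
  have hodd := Nat.odd_iff.mp hp
  have hp1 : 1 ≤ p := hprime.pos
  have hp2 : p ≠ 2 := by rintro rfl; simp at hodd
  set m' : ZMod p := (m : ZMod p) with hm'
  have hm0 : m' ≠ 0 := by
    rw [hm', Ne, ZMod.intCast_zmod_eq_zero_iff_dvd]; exact hm
  set x : ZMod p := m'⁻¹ with hx
  have hx0 : x ≠ 0 := inv_ne_zero hm0
  have hmx : m' * x = 1 := mul_inv_cancel₀ hm0
  have h2ne : (2 : ZMod p) ≠ 0 := by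
    have h2' : ((2 : ℕ) : ZMod p) ≠ 0 := by
      rw [Ne, ZMod.natCast_eq_zero_iff]
      intro h
      exact hp2 ((Nat.prime_dvd_prime_iff_eq hprime Nat.prime_two).mp h)
    exact_mod_cast h2'
  set S : ZMod p := ∑ k ∈ range p, (Nat.centralBinom k : ZMod p) * x ^ k with hS
  have hS_eq : S = (1 - 4 * x) ^ (p / 2) := by
    have h1 : S = ∑ k ∈ range p, ((p / 2).choose k : ZMod p) * (-4 * x) ^ k := by
      apply Finset.sum_congr rfl
      intro k hk
      rw [mem_range] at hk
      rw [cB_cong p hp k hk]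
      ring
    have hsub : range (p / 2 + 1) ⊆ range p := by
      apply Finset.range_subset_range.mpr
      omega
    have h2 : ∑ k ∈ range p, ((p / 2).choose k : ZMod p) * (-4 * x) ^ k
        = ∑ k ∈ range (p / 2 + 1), ((p / 2).choose k : ZMod p) * (-4 * x) ^ k := by
      symm
      apply Finset.sum_subset hsub
      intro k _ hk
      rw [mem_range, not_lt] at hk
      rw [Nat.choose_eq_zero_of_lt (by omega)]
      simp
    have h3 : ((-4 * x) + 1) ^ (p / 2)
        = ∑ k ∈ range (p / 2 + 1), ((p / 2).choose k : ZMod p) * (-4 * x) ^ k := by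
      rw [add_pow]
      apply Finset.sum_congr rfl
      intro k _
      rw [one_pow]
      ring
    rw [h1, h2, ← h3]
    ring
  have hleg : (legendreSym p (m * (m - 4)) : ZMod p) = S := by
    rw [legendreSym.eq_pow, hS_eq]
    have hcast : ((m * (m - 4) : ℤ) : ZMod p) = m' * (m' - 4) := by push_cast; ring
    rw [hcast]
    have hm14 : m' * (1 - 4 * x) = m' - 4 := by
      rw [mul_sub, mul_one, ← mul_assoc, mul_comm m' 4, mul_assoc, hmx, mul_one]
    have hmpow : m' ^ (p / 2) * m' ^ (p / 2) = 1 := by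
      rw [← pow_add]
      have hpp : p / 2 + p / 2 = p - 1 := by omega
      rw [hpp]
      exact ZMod.pow_card_sub_one_eq_one hm0
    calc (m' * (m' - 4)) ^ (p / 2) = m' ^ (p / 2) * (m' - 4) ^ (p / 2) := mul_pow _ _ _
      _ = m' ^ (p / 2) * (m' * (1 - 4 * x)) ^ (p / 2) := by rw [hm14]
      _ = m' ^ (p / 2) * (m' ^ (p / 2) * (1 - 4 * x) ^ (p / 2)) := by rw [mul_pow]
      _ = (1 - 4 * x) ^ (p / 2) := by rw [← mul_assoc, hmpow, one_mul]
  set n := p - 1 with hn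
  have hpn : p = n + 1 := by omega
  have hIcc : Finset.Icc 1 (p - 1) = Finset.Ico 1 p := by
    ext k; simp only [Finset.mem_Icc, Finset.mem_Ico]; omega
  set A : ZMod p := ∑ j ∈ range n, (Nat.centralBinom (j + 1) : ZMod p) * x ^ (j + 1) with hA
  set B : ZMod p := ∑ j ∈ range n, (Nat.centralBinom (j + 2) : ZMod p) * x ^ (j + 1) with hB
  have hc0 : (Nat.centralBinom 0 : ZMod p) = 1 := by norm_num [Nat.centralBinom]
  have hc1 : (Nat.centralBinom 1 : ZMod p) = 2 := by norm_num [Nat.centralBinom]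
  have hrange : range p = range (n + 1) := by rw [hpn]
  have hSA : S = 1 + A := by
    rw [hS, hrange, Finset.sum_range_succ', hA, hc0, pow_zero, mul_one, add_comm]
  have hBx : B * x = S - 1 := by
    have h1 : B * x = ∑ j ∈ range n, (Nat.centralBinom (j + 2) : ZMod p) * x ^ (j + 2) := by
      rw [hB, Finset.sum_mul]
      apply Finset.sum_congr rfl
      intro j _
      ring
    have h2 : ∑ k ∈ range (n + 2), (Nat.centralBinom k : ZMod p) * x ^ k
        = (∑ j ∈ range n, (Nat.centralBinom (j + 2) : ZMod p) * x ^ (j + 2))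
          + (1 + 2 * x) := by
      rw [Finset.sum_range_succ', Finset.sum_range_succ', hc0, hc1]
      have hstep : ∀ j : ℕ, j + 1 + 1 = j + 2 := fun j => rfl
      simp only [hstep]
      try ring
    have h3 : ∑ k ∈ range (n + 2), (Nat.centralBinom k : ZMod p) * x ^ k
        = S + 2 * x := by
      have hn2 : n + 2 = p + 1 := by omega
      rw [hn2, Finset.sum_range_succ, ← hS, cB_p p, ZMod.pow_card]
      try ring
    rw [h1]
    linear_combination (-1 : ZMod p) * (h3.symm.trans h2)
  have hB' : B = (S - 1) * m' := by
    have hbb : B * x * m' = (S - 1) * m' := by rw [hBx]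
    rwa [mul_assoc, mul_comm x m', hmx, mul_one] at hbb
  have hLHS : (2 : ZMod p) * ∑ k ∈ Finset.Icc 1 (p - 1), (catalan k : ZMod p) * ((m : ZMod p) ^ k)⁻¹
      = 4 * A - B := by
    have hre : Finset.Ico 1 p = Finset.Ico 1 (n + 1) := by rw [hpn]
    have hnn : n + 1 - 1 = n := rfl
    rw [hIcc, hre, Finset.mul_sum, Finset.sum_Ico_eq_sum_range, hnn]
    have hterm : ∀ j ∈ range n, 2 * ((catalan (1 + j) : ZMod p) * ((m : ZMod p) ^ (1 + j))⁻¹)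
        = 4 * ((Nat.centralBinom (j + 1) : ZMod p) * x ^ (j + 1))
          - (Nat.centralBinom (j + 2) : ZMod p) * x ^ (j + 1) := by
      intro j _
      have h1j : (1 : ℕ) + j = j + 1 := by omega
      rw [h1j]
      have hc : (2 : ZMod p) * (catalan (j + 1) : ZMod p)
          = 4 * (Nat.centralBinom (j + 1) : ZMod p) - (Nat.centralBinom (j + 2) : ZMod p) := by
        have hc0' := catalan_rel (j + 1)
        have hc1' : ((2 * catalan (j + 1) + Nat.centralBinom (j + 1 + 1) : ℕ) : ZMod p)
            = ((4 * Nat.centralBinom (j + 1) : ℕ) : ZMod p) := by rw [hc0']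
        push_cast at hc1'
        linear_combination hc1'
      have hxinv : ((m : ZMod p) ^ (j + 1))⁻¹ = x ^ (j + 1) := by
        rw [hx, ← inv_pow, hm']
      rw [hxinv]
      linear_combination x ^ (j + 1) * hc
    rw [Finset.sum_congr rfl hterm, Finset.sum_sub_distrib, ← Finset.mul_sum, ← hA, ← hB]
  have hRHS2 : (2 : ZMod p) * (((m - 4 : ℤ) : ZMod p) * (2 : ZMod p)⁻¹ *
      (1 - (legendreSym p (m * (m - 4)) : ZMod p))) = (m' - 4) * (1 - S) := by
    rw [hleg]
    have hcast : ((m - 4 : ℤ) : ZMod p) = m' - 4 := by push_cast; ring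
    rw [hcast]
    field_simp
    try ring
  apply mul_left_cancel₀ h2ne
  rw [hLHS, hRHS2]
  have hAS : A = S - 1 := by linear_combination (-1 : ZMod p) * hSA
  rw [hAS, hB']
  ring
end

section
/- For every odd prime p, $\sum_{k=1}^{p-1} S_k \equiv 2\left(\frac{-1}{p}\right) - 2^p \pmod{p^2}$. -/
open Finset

namespace Sun22

set_option linter.unusedSectionVars false

variable (p : ℕ) [hpf : Fact p.Prime]

local notation "R" => ZMod (p ^ 2)
local notation "F" => ZMod p

/-- reduction map -/
noncomputable def π : ZMod (p ^ 2) →+* ZMod p :=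
  ZMod.castHom (dvd_pow_self p two_ne_zero) (ZMod p)

lemma p_sq_zero : (p : R) * (p : R) = 0 := by
  have : ((p ^ 2 : ℕ) : R) = 0 := ZMod.natCast_self _
  push_cast at this
  rw [← this]; ring

lemma key_nat (a b : ℕ) (h : (a : F) = (b : F)) : (p : R) * a = (p : R) * b := by
  have hd : (p : ℤ) ∣ (a : ℤ) - (b : ℤ) := by
    rwa [← ZMod.intCast_zmod_eq_zero_iff_dvd, Int.cast_sub, sub_eq_zero, Int.cast_natCast,
      Int.cast_natCast]
  obtain ⟨c, hc⟩ := hd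
  have : ((p * ((a : ℤ) - b) : ℤ) : R) = 0 := by
    rw [hc]
    have h0 : ((p ^ 2 : ℕ) : R) = 0 := ZMod.natCast_self _
    push_cast at h0 ⊢
    linear_combination (c : R) * h0
  push_cast at this
  linear_combination this

lemma cancel_unit {a : ℕ} (ha : ¬ p ∣ a) {x y : R} (h : (a : R) * x = (a : R) * y) :
    x = y := by
  have hu : IsUnit (a : R) := by
    rw [ZMod.isUnit_iff_coprime]
    exact (((Nat.Prime.coprime_iff_not_dvd hpf.out).mpr ha).symm).pow_right _
  exact hu.mul_left_cancel h

/-- `phi y = p * y`, as a map `ZMod p → ZMod p²`. -/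
noncomputable def phi : ZMod p →+ ZMod (p ^ 2) where
  toFun y := (p : R) * ((ZMod.val y : ℕ) : R)
  map_zero' := by
    have : Fact (1 < p) := ⟨hpf.out.one_lt⟩
    simp [ZMod.val_zero]
  map_add' a b := by
    have : Fact (1 < p) := ⟨hpf.out.one_lt⟩
    have h : (((a + b).val : ℕ) : F) = ((a.val + b.val : ℕ) : F) := by
      push_cast [ZMod.natCast_val, ZMod.cast_id]; ring
    have h2 := key_nat p _ _ h
    show (p : R) * ((a + b).val : R) = (p : R) * (a.val : R) + (p : R) * (b.val : R)
    rw [h2]; push_cast; ring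

lemma phi_natCast (n : ℕ) : phi p ((n : F)) = (p : R) * (n : R) := by
  have : Fact (1 < p) := ⟨hpf.out.one_lt⟩
  have h : ((ZMod.val ((n : F)) : ℕ) : F) = (n : F) := by
    simp [ZMod.natCast_val, ZMod.cast_id]
  exact (key_nat p _ _ h)

lemma pmul_eq_phi (x : R) : (p : R) * x = phi p (π p x) := by
  have : Fact (1 < p) := ⟨hpf.out.one_lt⟩
  have hx : x = ((ZMod.val x : ℕ) : R) := by simp [ZMod.natCast_val, ZMod.cast_id]
  have h : ((ZMod.val x : ℕ) : F) = ((ZMod.val (π p x) : ℕ) : F) := by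
    have : π p x = ((ZMod.val x : ℕ) : F) := by
      simp [π, ZMod.castHom_apply, ZMod.natCast_val]
    rw [this]; simp [ZMod.natCast_val, ZMod.cast_id]
  calc (p : R) * x = (p : R) * ((ZMod.val x : ℕ) : R) := by rw [← hx]
    _ = (p : R) * ((ZMod.val (π p x) : ℕ) : R) := key_nat p _ _ h
    _ = phi p (π p x) := rfl

lemma phi_nat_mul (n : ℕ) (y : F) : (n : R) * phi p y = phi p ((n : F) * y) := by
  have : Fact (1 < p) := ⟨hpf.out.one_lt⟩
  have h : ((n * ZMod.val y : ℕ) : F) = ((ZMod.val ((n : F) * y) : ℕ) : F) := by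
    push_cast [ZMod.natCast_val, ZMod.cast_id]; ring
  calc (n : R) * phi p y = (p : R) * ((n * ZMod.val y : ℕ) : R) := by
        show (n : R) * ((p : R) * (ZMod.val y : R)) = _
        push_cast; ring
    _ = (p : R) * ((ZMod.val ((n : F) * y) : ℕ) : R) := key_nat p _ _ h
    _ = phi p ((n : F) * y) := rfl


/-! ### Product expansion in a ring with `x * x = 0` -/

lemma prod_add_nilsq {A : Type*} [CommRing A] (x : A) (hx : x * x = 0)
    (s : Finset ℕ) (f : ℕ → A) :
    ∏ i ∈ s, (f i + x) = ∏ i ∈ s, f i + x * ∑ i ∈ s, ∏ k ∈ s.erase i, f k := by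
  classical
  induction s using Finset.induction_on with
  | empty => simp
  | @insert a s ha ih =>
    rw [Finset.prod_insert ha, ih, Finset.prod_insert ha, Finset.sum_insert ha,
      Finset.erase_insert ha]
    have he : ∀ i ∈ s, ∏ k ∈ (insert a s).erase i, f k = f a * ∏ k ∈ s.erase i, f k := by
      intro i hi
      have hai : a ≠ i := fun hh => ha (hh ▸ hi)
      rw [Finset.erase_insert_of_ne hai,
        Finset.prod_insert (fun hh => ha (Finset.mem_of_mem_erase hh))]
    rw [Finset.sum_congr rfl he, ← Finset.mul_sum]
    linear_combination (∑ i ∈ s, ∏ k ∈ s.erase i, f k) * hx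

/-! ### Nat binomial identities -/

lemma asc_eq_prod (n k : ℕ) : (n + 1).ascFactorial k = ∏ i ∈ Finset.range k, (n + 1 + i) := by
  induction k with
  | zero => simp
  | succ k ih => rw [Nat.ascFactorial_succ, Finset.prod_range_succ, ih]; ring

lemma G1 (n k : ℕ) : Nat.factorial k * (n + k).choose k = ∏ i ∈ Finset.range k, (n + 1 + i) := by
  rw [← Nat.ascFactorial_eq_factorial_mul_choose, asc_eq_prod]

lemma G2 (n k : ℕ) : Nat.factorial k * n.choose k = ∏ i ∈ Finset.range k, (n - i) := by
  rw [← Nat.descFactorial_eq_factorial_mul_choose, Nat.descFactorial_eq_prod_range]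

lemma cat1 (j : ℕ) : (2 * j + 1) * catalan j = (2 * j + 1).choose (j + 1) := by
  have h1 := Nat.add_one_mul_choose_eq (2 * j) j
  have h2 := succ_mul_catalan_eq_centralBinom j
  have h3 : Nat.centralBinom j = (2 * j).choose j := rfl
  have key : (2 * j + 1) * ((j + 1) * catalan j) = (2 * j + 1).choose (j + 1) * (j + 1) := by
    rw [h2, h3]; exact h1
  have key2 : (j + 1) * ((2 * j + 1) * catalan j) = (j + 1) * (2 * j + 1).choose (j + 1) := by
    calc (j + 1) * ((2 * j + 1) * catalan j) = (2 * j + 1) * ((j + 1) * catalan j) := by ring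
      _ = (2 * j + 1).choose (j + 1) * (j + 1) := key
      _ = (j + 1) * (2 * j + 1).choose (j + 1) := by ring
  exact Nat.eq_of_mul_eq_mul_left (Nat.succ_pos j) key2

lemma cat1' (j : ℕ) : (2 * j + 1) * catalan j = (2 * j + 1).choose j := by
  have hs : (2 * j + 1).choose (j + 1) = (2 * j + 1).choose j := by
    have h := Nat.choose_symm (show j ≤ 2 * j + 1 by omega)
    rwa [show 2 * j + 1 - j = j + 1 from by omega] at h
  rw [cat1, hs]

lemma N2 (p j : ℕ) (hj : j + 1 ≤ p) :
    (2 * j + 1) * ((p + j).choose (2 * j + 1) * catalan j) =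
      (p + j).choose j * p.choose (j + 1) := by
  have h := Nat.choose_mul (n := p + j) (k := 2 * j + 1) (s := j) (by omega)
  calc (2 * j + 1) * ((p + j).choose (2 * j + 1) * catalan j)
      = (p + j).choose (2 * j + 1) * ((2 * j + 1) * catalan j) := by ring
    _ = (p + j).choose (2 * j + 1) * (2 * j + 1).choose j := by rw [cat1']
    _ = (p + j).choose j * (p + j - j).choose (2 * j + 1 - j) := h
    _ = (p + j).choose j * p.choose (j + 1) := by
        rw [show p + j - j = p from by omega, show 2 * j + 1 - j = j + 1 from by omega]

lemma N3 (p j : ℕ) (hp : 1 ≤ p) : (j + 1) * p.choose (j + 1) = p * (p - 1).choose j := by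
  have h := Nat.add_one_mul_choose_eq (p - 1) j
  rw [show p - 1 + 1 = p from by omega] at h
  rw [Nat.mul_comm]
  exact h.symm

lemma N5 (n : ℕ) : Nat.centralBinom n = (2 * n).choose (n + 1) + catalan n := by
  have h1 : (n + 1) * (2 * n).choose (n + 1) = n * (2 * n).choose n := by
    have h := Nat.choose_succ_right_eq (2 * n) n
    rw [show 2 * n - n = n from by omega] at h
    rw [Nat.mul_comm]; rw [h]; ring
  have h2 := succ_mul_catalan_eq_centralBinom n
  have h3 : Nat.centralBinom n = (2 * n).choose n := rfl
  have key : (n + 1) * Nat.centralBinom n = (n + 1) * ((2 * n).choose (n + 1) + catalan n) := by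
    rw [Nat.mul_add, h1, h2, h3]; ring
  exact Nat.eq_of_mul_eq_mul_left (Nat.succ_pos n) key


/-! ### The sum swap + hockey stick -/

lemma N1 (p : ℕ) (hp : 1 ≤ p) :
    ∑ k ∈ Finset.Icc 1 (p - 1), schroeder k + 1 =
      ∑ j ∈ Finset.range p, (p + j).choose (2 * j + 1) * catalan j := by
  have h0 : ∑ k ∈ Finset.range p, schroeder k
      = ∑ k ∈ Finset.Icc 1 (p - 1), schroeder k + 1 := by
    have hr : Finset.range p = insert 0 (Finset.Icc 1 (p - 1)) := by
      ext x; simp only [Finset.mem_range, Finset.mem_insert, Finset.mem_Icc]; omega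
    have hs0 : schroeder 0 = 1 := by simp [schroeder]
    rw [hr, Finset.sum_insert (by simp), hs0]; ring
  rw [← h0]
  have h1 : ∀ k ∈ Finset.range p,
      schroeder k = ∑ j ∈ Finset.range p, (k + j).choose (2 * j) * catalan j := by
    intro k hk
    simp only [Finset.mem_range] at hk
    rw [schroeder]
    apply Finset.sum_subset
    · intro j hj; simp only [Finset.mem_range] at hj ⊢; omega
    · intro j hj hj2
      simp only [Finset.mem_range] at hj hj2
      rw [Nat.choose_eq_zero_of_lt (by omega), Nat.zero_mul]
  rw [Finset.sum_congr rfl h1, Finset.sum_comm]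
  apply Finset.sum_congr rfl
  intro j hj
  simp only [Finset.mem_range] at hj
  rw [← Finset.sum_mul]
  congr 1
  have e1 : ∑ k ∈ Finset.range p, (k + j).choose (2 * j)
      = ∑ i ∈ Finset.Ico j (j + p), i.choose (2 * j) := by
    rw [Finset.sum_Ico_eq_sum_range]
    rw [show j + p - j = p from by omega]
    exact Finset.sum_congr rfl fun k _ => by rw [Nat.add_comm j k]
  have e2 : Finset.Ico j (j + p) = Finset.Icc j (j + p - 1) := by
    rw [← Finset.Ico_add_one_right_eq_Icc]
    congr 1
    omega
  have e3 : ∑ i ∈ Finset.Icc j (j + p - 1), i.choose (2 * j)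
      = ∑ i ∈ Finset.Icc (2 * j) (j + p - 1), i.choose (2 * j) := by
    symm
    apply Finset.sum_subset
    · intro i hi; simp only [Finset.mem_Icc] at hi ⊢; omega
    · intro i hi hi2
      simp only [Finset.mem_Icc] at hi hi2
      exact Nat.choose_eq_zero_of_lt (by omega)
  rw [e1, e2, e3, Nat.sum_Icc_choose]
  congr 1
  omega

/-! ### mod p facts -/

lemma Fne {m : ℕ} (h1 : 0 < m) (h2 : m < p) : ((m : ℕ) : F) ≠ 0 := by
  intro h
  rw [ZMod.natCast_eq_zero_iff] at h
  exact absurd (Nat.le_of_dvd h1 h) (by omega)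

lemma fact_ne {m : ℕ} (h2 : m < p) : ((Nat.factorial m : ℕ) : F) ≠ 0 := by
  intro h
  rw [ZMod.natCast_eq_zero_iff] at h
  rw [Nat.Prime.dvd_factorial hpf.out] at h
  omega

lemma prod_one_add (n : ℕ) : ∏ i ∈ Finset.range n, ((1 + i : ℕ) : F) = ((Nat.factorial n : ℕ) : F) := by
  rw [← Nat.cast_prod]
  congr 1
  calc ∏ i ∈ Finset.range n, (1 + i) = ∏ i ∈ Finset.range n, (i + 1) :=
        Finset.prod_congr rfl fun i _ => Nat.add_comm 1 i
    _ = Nat.factorial n := Finset.prod_range_add_one_eq_factorial n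

lemma F2 {j : ℕ} (hj : j < p) : (((p + j).choose j : ℕ) : F) = 1 := by
  have h := congrArg (Nat.cast : ℕ → F) (G1 p j)
  push_cast at h
  rw [ZMod.natCast_self] at h
  simp only [zero_add] at h
  have hp2 : ∏ x ∈ Finset.range j, (1 + (x : F)) = ((Nat.factorial j : ℕ) : F) := by
    have h6 := prod_one_add p j
    push_cast at h6
    exact h6
  rw [hp2] at h
  exact mul_left_cancel₀ (fact_ne p hj) (h.trans (mul_one _).symm)

lemma F3 {j : ℕ} (hj : j < p) : (((p - 1).choose j : ℕ) : F) = (-1 : F) ^ j := by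
  have h := congrArg (Nat.cast : ℕ → F) (G2 (p - 1) j)
  push_cast at h
  have hterm : ∀ i ∈ Finset.range j, (((p - 1 - i : ℕ)) : F) = -(1 + (i : F)) := by
    intro i hi
    simp only [Finset.mem_range] at hi
    have hpi : (p - 1 - i) + (1 + i) = p := by omega
    have h5 := congrArg (Nat.cast : ℕ → F) hpi
    push_cast at h5
    rw [ZMod.natCast_self] at h5
    linear_combination h5
  rw [Finset.prod_congr rfl hterm] at h
  have h2 : ∏ i ∈ Finset.range j, (-(1 + (i : F)))
      = (-1 : F) ^ j * ((Nat.factorial j : ℕ) : F) := by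
    have hp2 : ∏ x ∈ Finset.range j, (1 + (x : F)) = ((Nat.factorial j : ℕ) : F) := by
      have h6 := prod_one_add p j
      push_cast at h6
      exact h6
    calc ∏ i ∈ Finset.range j, (-(1 + (i : F)))
        = ∏ i ∈ Finset.range j, ((-1 : F) * (1 + (i : F))) :=
          Finset.prod_congr rfl fun i _ => by ring
      _ = (-1 : F) ^ j * ∏ i ∈ Finset.range j, (1 + (i : F)) := by
          rw [Finset.prod_mul_distrib, Finset.prod_const, Finset.card_range]
      _ = (-1 : F) ^ j * ((Nat.factorial j : ℕ) : F) := by rw [hp2]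
  rw [h2] at h
  exact mul_left_cancel₀ (fact_ne p hj) (h.trans (by ring))


lemma neg_one_pow_congr {α : Type*} [Monoid α] [HasDistribNeg α] {m n : ℕ} (h : m % 2 = n % 2) :
    (-1 : α) ^ m = (-1 : α) ^ n := by
  rcases Nat.even_or_odd m with he | ho
  · have h2 : Even n := Nat.even_iff.mpr (by rw [← h]; exact Nat.even_iff.mp he)
    rw [he.neg_one_pow, h2.neg_one_pow]
  · have h2 : Odd n := Nat.odd_iff.mpr (by rw [← h]; exact Nat.odd_iff.mp ho)
    rw [ho.neg_one_pow, h2.neg_one_pow]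

lemma H1 (ho : Odd p) : ∑ m ∈ Finset.Icc 1 (p - 1), ((m : ℕ) : F)⁻¹ = 0 := by
  obtain ⟨c, hc⟩ := ho
  apply Finset.sum_involution (fun a _ => p - a)
  · intro a ha
    simp only [Finset.mem_Icc] at ha
    have hcast : ((p - a : ℕ) : F) = -((a : ℕ) : F) := by
      have hpi : (p - a) + a = p := by omega
      have h5 := congrArg (Nat.cast : ℕ → F) hpi
      push_cast at h5
      rw [ZMod.natCast_self] at h5
      push_cast
      linear_combination h5
    show ((a : ℕ) : F)⁻¹ + ((p - a : ℕ) : F)⁻¹ = 0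
    rw [hcast, inv_neg]
    ring
  · intro a ha _
    simp only [Finset.mem_Icc] at ha
    show p - a ≠ a
    omega
  · intro a ha
    simp only [Finset.mem_Icc] at ha ⊢
    omega
  · intro a ha
    simp only [Finset.mem_Icc] at ha
    show p - (p - a) = a
    omega

lemma Hp2 (ho : Odd p) (hp3 : 3 ≤ p) :
    ∑ i ∈ Finset.range (p - 2), ((1 + i : ℕ) : F)⁻¹ = 1 := by
  have h1 := H1 p ho
  have hins : Finset.Icc 1 (p - 1) = insert (p - 1) (Finset.Icc 1 (p - 2)) := by
    ext x; simp only [Finset.mem_Icc, Finset.mem_insert]; omega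
  rw [hins, Finset.sum_insert (by simp only [Finset.mem_Icc]; omega)] at h1
  have hm1 : ((p - 1 : ℕ) : F) = -1 := by
    have hpi : (p - 1) + 1 = p := by omega
    have h5 := congrArg (Nat.cast : ℕ → F) hpi
    push_cast at h5
    rw [ZMod.natCast_self] at h5
    linear_combination h5
  rw [hm1] at h1
  have hre : ∑ m ∈ Finset.Icc 1 (p - 2), ((m : ℕ) : F)⁻¹
      = ∑ i ∈ Finset.range (p - 2), ((1 + i : ℕ) : F)⁻¹ := by
    rw [show Finset.Icc 1 (p - 2) = Finset.Ico 1 (p - 1) from by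
      rw [← Finset.Ico_add_one_right_eq_Icc]; congr 1; omega]
    rw [Finset.sum_Ico_eq_sum_range]
    rw [show p - 1 - 1 = p - 2 from by omega]
  rw [hre, inv_neg, inv_one] at h1
  linear_combination h1

lemma HE (ho : Odd p) (hp3 : 3 ≤ p) :
    ∑ i ∈ Finset.range (p - 2), ∏ k ∈ (Finset.range (p - 2)).erase i, ((1 + k : ℕ) : F)
      = ((Nat.factorial (p - 2) : ℕ) : F) := by
  have hterm : ∀ i ∈ Finset.range (p - 2),
      ∏ k ∈ (Finset.range (p - 2)).erase i, ((1 + k : ℕ) : F)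
        = ((Nat.factorial (p - 2) : ℕ) : F) * ((1 + i : ℕ) : F)⁻¹ := by
    intro i hi
    simp only [Finset.mem_range] at hi
    have hne : ((1 + i : ℕ) : F) ≠ 0 := Fne p (by omega) (by omega)
    have hmp := Finset.mul_prod_erase (Finset.range (p - 2))
      (fun k => ((1 + k : ℕ) : F)) (Finset.mem_range.mpr hi)
    rw [prod_one_add] at hmp
    rw [eq_comm, ← div_eq_mul_inv, div_eq_iff hne]
    linear_combination -hmp
  rw [Finset.sum_congr rfl hterm, ← Finset.mul_sum, Hp2 p ho hp3, mul_one]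

lemma SA (ho : Odd p) (hp3 : 3 ≤ p) :
    ∑ j ∈ (Finset.range (p - 1)).erase ((p - 1) / 2),
        (-1 : F) ^ j * ((2 * j + 1 : ℕ) : F)⁻¹ = 1 := by
  obtain ⟨c, hc⟩ := ho
  have hJ' : ∑ j ∈ (Finset.range p).erase ((p - 1) / 2),
      (-1 : F) ^ j * ((2 * j + 1 : ℕ) : F)⁻¹ = 0 := by
    apply Finset.sum_involution (fun a _ => p - 1 - a)
    · intro a ha
      simp only [Finset.mem_erase, Finset.mem_range] at ha
      have hcast : ((2 * (p - 1 - a) + 1 : ℕ) : F) = -((2 * a + 1 : ℕ) : F) := by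
        have hpi : (2 * (p - 1 - a) + 1) + (2 * a + 1) = 2 * p := by omega
        have h5 := congrArg (Nat.cast : ℕ → F) hpi
        push_cast at h5
        rw [ZMod.natCast_self] at h5
        push_cast
        linear_combination h5
      have hpow : (-1 : F) ^ (p - 1 - a) = (-1 : F) ^ a := neg_one_pow_congr (by omega)
      show (-1 : F) ^ a * ((2 * a + 1 : ℕ) : F)⁻¹
          + (-1 : F) ^ (p - 1 - a) * ((2 * (p - 1 - a) + 1 : ℕ) : F)⁻¹ = 0
      rw [hcast, hpow, inv_neg]
      ring
    · intro a ha _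
      simp only [Finset.mem_erase, Finset.mem_range] at ha
      show p - 1 - a ≠ a
      omega
    · intro a ha
      simp only [Finset.mem_erase, Finset.mem_range] at ha ⊢
      omega
    · intro a ha
      simp only [Finset.mem_erase, Finset.mem_range] at ha
      show p - 1 - (p - 1 - a) = a
      omega
  have hsplit : (Finset.range p).erase ((p - 1) / 2)
      = insert (p - 1) ((Finset.range (p - 1)).erase ((p - 1) / 2)) := by
    ext x; simp only [Finset.mem_erase, Finset.mem_range, Finset.mem_insert]; omega
  rw [hsplit, Finset.sum_insert (by simp only [Finset.mem_erase, Finset.mem_range]; omega)] at hJ'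
  have hf : (-1 : F) ^ (p - 1) * ((2 * (p - 1) + 1 : ℕ) : F)⁻¹ = -1 := by
    have hpow : (-1 : F) ^ (p - 1) = 1 := (Nat.even_iff.mpr (by omega)).neg_one_pow
    have hc2 : ((2 * (p - 1) + 1 : ℕ) : F) = -1 := by
      have hpi : (2 * (p - 1) + 1) + 1 = 2 * p := by omega
      have h5 := congrArg (Nat.cast : ℕ → F) hpi
      push_cast at h5
      rw [ZMod.natCast_self] at h5
      push_cast
      linear_combination h5
    rw [hpow, hc2, inv_neg, inv_one]
    ring
  rw [hf] at hJ'
  linear_combination hJ'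

lemma SB (ho : Odd p) (hp3 : 3 ≤ p) :
    ∑ j ∈ (Finset.range (p - 1)).erase ((p - 1) / 2), (-1 : F) ^ j * ((j + 1 : ℕ) : F)⁻¹
      = (∑ j ∈ Finset.range (p - 1), (-1 : F) ^ j * ((j + 1 : ℕ) : F)⁻¹)
        - 2 * (-1 : F) ^ ((p - 1) / 2) := by
  have hmem : (p - 1) / 2 ∈ Finset.range (p - 1) := Finset.mem_range.mpr (by omega)
  have hera := Finset.sum_erase_add (Finset.range (p - 1))
    (fun j => (-1 : F) ^ j * ((j + 1 : ℕ) : F)⁻¹) hmem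
  have hval : (-1 : F) ^ ((p - 1) / 2) * (((p - 1) / 2 + 1 : ℕ) : F)⁻¹
      = 2 * (-1 : F) ^ ((p - 1) / 2) := by
    have hmul : (((p - 1) / 2 + 1 : ℕ) : F) * 2 = 1 := by
      obtain ⟨c, hc⟩ := ho
      have hpi : ((p - 1) / 2 + 1) * 2 = p + 1 := by omega
      have h5 := congrArg (Nat.cast : ℕ → F) hpi
      push_cast at h5
      rw [ZMod.natCast_self] at h5
      push_cast
      linear_combination h5
    rw [inv_eq_of_mul_eq_one_right hmul]
    ring
  linear_combination hera - hval

lemma LJ (ho : Odd p) (hp3 : 3 ≤ p) :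
    ∑ j ∈ (Finset.range (p - 1)).erase ((p - 1) / 2),
        (-1 : F) ^ j * (((j + 1) * (2 * j + 1) : ℕ) : F)⁻¹
      = 2 - (∑ j ∈ Finset.range (p - 1), (-1 : F) ^ j * ((j + 1 : ℕ) : F)⁻¹)
        + 2 * (-1 : F) ^ ((p - 1) / 2) := by
  have hsplit : ∀ j ∈ (Finset.range (p - 1)).erase ((p - 1) / 2),
      (-1 : F) ^ j * (((j + 1) * (2 * j + 1) : ℕ) : F)⁻¹
        = 2 * ((-1 : F) ^ j * ((2 * j + 1 : ℕ) : F)⁻¹)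
          - (-1 : F) ^ j * ((j + 1 : ℕ) : F)⁻¹ := by
    intro j hj
    simp only [Finset.mem_erase, Finset.mem_range] at hj
    have ha : ((j + 1 : ℕ) : F) ≠ 0 := Fne p (by omega) (by omega)
    have hb : ((2 * j + 1 : ℕ) : F) ≠ 0 := by
      intro hcon
      rw [ZMod.natCast_eq_zero_iff] at hcon
      obtain ⟨c, hcc⟩ := hcon
      obtain ⟨d, hd⟩ := ho
      match c with
      | 0 => omega
      | 1 => omega
      | (k + 2) =>
        have h2 : p * 2 ≤ p * (k + 2) := Nat.mul_le_mul_left p (by omega)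
        omega
    have hmulcast : (((j + 1) * (2 * j + 1) : ℕ) : F)
        = ((j + 1 : ℕ) : F) * ((2 * j + 1 : ℕ) : F) := by push_cast; ring
    rw [hmulcast, mul_inv]
    apply mul_right_cancel₀ (mul_ne_zero ha hb)
    have e1 : ((j + 1 : ℕ) : F)⁻¹ * ((j + 1 : ℕ) : F) = 1 := inv_mul_cancel₀ ha
    have e2 : ((2 * j + 1 : ℕ) : F)⁻¹ * ((2 * j + 1 : ℕ) : F) = 1 := inv_mul_cancel₀ hb
    have e3 : ((j + 1 : ℕ) : F) * 2 - ((2 * j + 1 : ℕ) : F) = 1 := by push_cast; ring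
    linear_combination ((-1 : F) ^ j * ((2 * j + 1 : ℕ) : F)⁻¹ * ((2 * j + 1 : ℕ) : F)) * e1
      + ((-1 : F) ^ j) * e2 - (2 * (-1 : F) ^ j * ((j + 1 : ℕ) : F)) * e2
      + ((-1 : F) ^ j * ((2 * j + 1 : ℕ) : F)) * e1 - ((-1 : F) ^ j) * e3
  rw [Finset.sum_congr rfl hsplit, Finset.sum_sub_distrib, ← Finset.mul_sum,
    SA p ho hp3, SB p ho hp3]
  ring


/-! ### mod p² facts -/

lemma prod_one_add' {A : Type*} [CommSemiring A] (n : ℕ) :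
    ∏ i ∈ Finset.range n, (1 + (i : A)) = (Nat.factorial n : A) := by
  have h := congrArg (Nat.cast : ℕ → A) (Finset.prod_range_add_one_eq_factorial n)
  push_cast at h
  rw [← h]
  exact Finset.prod_congr rfl fun i _ => by ring

lemma HE' (ho : Odd p) (hp3 : 3 ≤ p) :
    ∑ i ∈ Finset.range (p - 2), ∏ k ∈ (Finset.range (p - 2)).erase i, (1 + (k : F))
      = ((Nat.factorial (p - 2) : ℕ) : F) := by
  rw [← HE p ho hp3]
  exact Finset.sum_congr rfl fun i _ => Finset.prod_congr rfl fun k _ => by push_cast; ring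

/-- the key product expansion over `range (p-2)` -/
lemma hPP (ho : Odd p) (hp3 : 3 ≤ p) :
    ∏ i ∈ Finset.range (p - 2), ((p : R) + 1 + (i : R))
      = (Nat.factorial (p - 2) : R) + (p : R) * (Nat.factorial (p - 2) : R) := by
  have hconv : ∀ i ∈ Finset.range (p - 2), (p : R) + 1 + (i : R) = (1 + (i : R)) + (p : R) :=
    fun i _ => by ring
  rw [Finset.prod_congr rfl hconv, prod_add_nilsq _ (p_sq_zero p), prod_one_add']
  congr 1
  rw [pmul_eq_phi, pmul_eq_phi]
  congr 1
  rw [map_sum, map_natCast]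
  rw [← HE' p ho hp3]
  refine Finset.sum_congr rfl fun i _ => ?_
  rw [map_prod]
  exact Finset.prod_congr rfl fun k _ => by simp

lemma Lc2 (ho : Odd p) (hp3 : 3 ≤ p) : (((2 * p - 2).choose p : ℕ) : R) = 1 + (p : R) := by
  have hsymm : (2 * p - 2).choose p = (2 * p - 2).choose (p - 2) := by
    have h := Nat.choose_symm (show p ≤ 2 * p - 2 by omega)
    rw [show 2 * p - 2 - p = p - 2 from by omega] at h
    exact h.symm
  have hG := G1 p (p - 2)
  rw [show p + (p - 2) = 2 * p - 2 from by omega] at hG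
  rw [hsymm]
  apply cancel_unit p (show ¬ p ∣ Nat.factorial (p - 2) from by
    rw [Nat.Prime.dvd_factorial hpf.out]; omega)
  have hR := congrArg (Nat.cast : ℕ → ZMod (p ^ 2)) hG
  push_cast at hR
  rw [hR, hPP p ho hp3]
  push_cast
  ring

lemma LCB (ho : Odd p) (hp3 : 3 ≤ p) : ((Nat.centralBinom (p - 1) : ℕ) : R) = -(p : R) := by
  have hG := G1 (p - 1) (p - 1)
  rw [show p - 1 + (p - 1) = 2 * p - 2 from by omega,
    show p - 1 + 1 = p from by omega] at hG
  have hCB : Nat.centralBinom (p - 1) = (2 * p - 2).choose (p - 1) := by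
    have : Nat.centralBinom (p - 1) = (2 * (p - 1)).choose (p - 1) := rfl
    rw [this, show 2 * (p - 1) = 2 * p - 2 from by omega]
  have hsplit : ∏ i ∈ Finset.range (p - 1), (p + i)
      = (∏ i ∈ Finset.range (p - 2), (p + 1 + i)) * p := by
    rw [show p - 1 = (p - 2) + 1 from by omega, Finset.prod_range_succ']
    simp only [Nat.add_zero]
    congr 1
    exact Finset.prod_congr rfl fun i _ => by omega
  rw [hsplit] at hG
  rw [hCB]
  apply cancel_unit p (show ¬ p ∣ Nat.factorial (p - 1) from by
    rw [Nat.Prime.dvd_factorial hpf.out]; omega)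
  have hR := congrArg (Nat.cast : ℕ → ZMod (p ^ 2)) hG
  push_cast at hR
  rw [hR, hPP p ho hp3]
  have hfacts : (Nat.factorial (p - 1) : R) = ((p : R) - 1) * (Nat.factorial (p - 2) : R) := by
    have h7 : Nat.factorial (p - 1) = (p - 1) * Nat.factorial (p - 2) := by
      rw [show p - 1 = (p - 2) + 1 from by omega, Nat.factorial_succ]
    rw [h7]
    push_cast [show (1 : ℕ) ≤ p from by omega]
    ring
  rw [hfacts]
  have hps := p_sq_zero p
  linear_combination (2 * (Nat.factorial (p - 2) : R)) * hps

lemma Lcat (ho : Odd p) (hp3 : 3 ≤ p) : ((catalan (p - 1) : ℕ) : R) = -1 - 2 * (p : R) := by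
  have hN := N5 (p - 1)
  rw [show 2 * (p - 1) = 2 * p - 2 from by omega, show p - 1 + 1 = p from by omega] at hN
  have hR := congrArg (Nat.cast : ℕ → ZMod (p ^ 2)) hN
  push_cast at hR
  rw [LCB p ho hp3, Lc2 p ho hp3] at hR
  linear_combination -hR

lemma Lord (ho : Odd p) (hp3 : 3 ≤ p) {j : ℕ} (hjlt : j < p - 1) (hne : j ≠ (p - 1) / 2) :
    (((p + j).choose (2 * j + 1) * catalan j : ℕ) : R)
      = phi p ((-1 : F) ^ j * (((j + 1) * (2 * j + 1) : ℕ) : F)⁻¹) := by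
  obtain ⟨d, hd⟩ := ho
  have hpc : ¬ p ∣ (j + 1) * (2 * j + 1) := by
    intro hdvd
    rcases (Nat.Prime.dvd_mul hpf.out).mp hdvd with h1 | h2
    · exact absurd (Nat.le_of_dvd (by omega) h1) (by omega)
    · obtain ⟨c, hcc⟩ := h2
      match c with
      | 0 => omega
      | 1 => omega
      | (k + 2) =>
        have h9 : p * 2 ≤ p * (k + 2) := Nat.mul_le_mul_left p (by omega)
        omega
  have hcF : (((j + 1) * (2 * j + 1) : ℕ) : F) ≠ 0 := by
    rw [Ne, ZMod.natCast_eq_zero_iff]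
    exact hpc
  have hN : ((j + 1) * (2 * j + 1)) * ((p + j).choose (2 * j + 1) * catalan j)
      = (p + j).choose j * (p * (p - 1).choose j) := by
    calc ((j + 1) * (2 * j + 1)) * ((p + j).choose (2 * j + 1) * catalan j)
        = (j + 1) * ((2 * j + 1) * ((p + j).choose (2 * j + 1) * catalan j)) := by ring
      _ = (j + 1) * ((p + j).choose j * p.choose (j + 1)) := by rw [N2 p j (by omega)]
      _ = (p + j).choose j * ((j + 1) * p.choose (j + 1)) := by ring
      _ = (p + j).choose j * (p * (p - 1).choose j) := by rw [N3 p j (by omega)]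
  have hR := congrArg (Nat.cast : ℕ → ZMod (p ^ 2)) hN
  push_cast at hR
  have h1 : ((((j + 1) * (2 * j + 1) : ℕ)) : R)
        * (((p + j).choose (2 * j + 1) * catalan j : ℕ) : R)
      = phi p ((-1 : F) ^ j) := by
    have h2 : ((((j + 1) * (2 * j + 1) : ℕ)) : R)
          * (((p + j).choose (2 * j + 1) * catalan j : ℕ) : R)
        = (p : R) * (((p + j).choose j * (p - 1).choose j : ℕ) : R) := by
      push_cast
      linear_combination hR
    rw [h2, pmul_eq_phi]
    congr 1
    rw [map_natCast]
    push_cast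
    rw [F2 p (by omega), F3 p (by omega)]
    ring
  have h3 : ((((j + 1) * (2 * j + 1) : ℕ)) : R)
        * phi p ((-1 : F) ^ j * (((j + 1) * (2 * j + 1) : ℕ) : F)⁻¹)
      = phi p ((-1 : F) ^ j) := by
    rw [phi_nat_mul]
    congr 1
    rw [mul_comm ((-1 : F) ^ j) _, ← mul_assoc, mul_inv_cancel₀ hcF, one_mul]
  exact cancel_unit p hpc (h1.trans h3.symm)

lemma Lt (ho : Odd p) (hp3 : 3 ≤ p) :
    (((p + (p - 1) / 2).choose p * catalan ((p - 1) / 2) : ℕ) : R)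
      = (-1 : R) ^ ((p - 1) / 2) * (2 - 2 * (p : R)) := by
  obtain ⟨d, hd⟩ := ho
  set m := (p - 1) / 2 with hm
  have hm1 : 1 ≤ m := by omega
  have hmp : m < p := by omega
  have hm1p : m + 1 < p := by omega
  have hN : (m + 1) * ((p + m).choose p * catalan m) = (p + m).choose m * (p - 1).choose m := by
    have hsymm : (p + m).choose p = (p + m).choose m := by
      have h := Nat.choose_symm (show m ≤ p + m by omega)
      rwa [show p + m - m = p from by omega] at h
    rw [hsymm]
    calc (m + 1) * ((p + m).choose m * catalan m)
        = (p + m).choose m * ((m + 1) * catalan m) := by ring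
      _ = (p + m).choose m * Nat.centralBinom m := by rw [succ_mul_catalan_eq_centralBinom]
      _ = (p + m).choose m * (2 * m).choose m := rfl
      _ = (p + m).choose m * (p - 1).choose m := by rw [show 2 * m = p - 1 from by omega]
  -- product expansions
  have hA := congrArg (Nat.cast : ℕ → ZMod (p ^ 2)) (G1 p m)
  have hB := congrArg (Nat.cast : ℕ → ZMod (p ^ 2)) (G2 (p - 1) m)
  push_cast at hA hB
  set E : R := ∑ i ∈ Finset.range m, ∏ k ∈ (Finset.range m).erase i, (1 + (k : R)) with hE
  have hAex : (Nat.factorial m : R) * (((p + m).choose m : ℕ) : R)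
      = (Nat.factorial m : R) + (p : R) * E := by
    rw [hA]
    have hconv : ∀ i ∈ Finset.range m, (p : R) + 1 + (i : R) = (1 + (i : R)) + (p : R) :=
      fun i _ => by ring
    rw [Finset.prod_congr rfl hconv, prod_add_nilsq _ (p_sq_zero p), prod_one_add']
  have hBex : (Nat.factorial m : R) * (((p - 1).choose m : ℕ) : R)
      = (-1 : R) ^ m * ((Nat.factorial m : R) - (p : R) * E) := by
    rw [hB]
    have hconv : ∀ i ∈ Finset.range m, (((p - 1 - i : ℕ)) : R) = (-(1 + (i : R))) + (p : R) := by
      intro i hi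
      simp only [Finset.mem_range] at hi
      have hpi : (p - 1 - i) + (1 + i) = p := by omega
      have h5 := congrArg (Nat.cast : ℕ → ZMod (p ^ 2)) hpi
      push_cast at h5
      linear_combination h5
    rw [Finset.prod_congr rfl hconv, prod_add_nilsq _ (p_sq_zero p)]
    have hprodneg : ∏ i ∈ Finset.range m, (-(1 + (i : R)))
        = (-1 : R) ^ m * (Nat.factorial m : R) := by
      calc ∏ i ∈ Finset.range m, (-(1 + (i : R)))
          = ∏ i ∈ Finset.range m, ((-1 : R) * (1 + (i : R))) :=
            Finset.prod_congr rfl fun i _ => by ring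
        _ = (-1 : R) ^ m * ∏ i ∈ Finset.range m, (1 + (i : R)) := by
            rw [Finset.prod_mul_distrib, Finset.prod_const, Finset.card_range]
        _ = (-1 : R) ^ m * (Nat.factorial m : R) := by rw [prod_one_add']
    have hsumneg : ∑ i ∈ Finset.range m, ∏ k ∈ (Finset.range m).erase i, (-(1 + (k : R)))
        = (-1 : R) ^ (m - 1) * E := by
      rw [hE, Finset.mul_sum]
      refine Finset.sum_congr rfl fun i hi => ?_
      calc ∏ k ∈ (Finset.range m).erase i, (-(1 + (k : R)))
          = ∏ k ∈ (Finset.range m).erase i, ((-1 : R) * (1 + (k : R))) :=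
            Finset.prod_congr rfl fun k _ => by ring
        _ = (-1 : R) ^ ((Finset.range m).erase i).card
              * ∏ k ∈ (Finset.range m).erase i, (1 + (k : R)) := by
            rw [Finset.prod_mul_distrib, Finset.prod_const]
        _ = (-1 : R) ^ (m - 1) * ∏ k ∈ (Finset.range m).erase i, (1 + (k : R)) := by
            rw [Finset.card_erase_of_mem hi, Finset.card_range]
    rw [hprodneg, hsumneg]
    have hpow : (-1 : R) ^ m = (-1 : R) ^ (m - 1) * (-1) := by
      conv_lhs => rw [show m = (m - 1) + 1 from by omega]
      exact pow_succ _ _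
    rw [hpow]
    ring
  -- multiply
  have hcomb : ((Nat.factorial m * Nat.factorial m * (m + 1) : ℕ) : R)
        * (((p + m).choose p * catalan m : ℕ) : R)
      = (-1 : R) ^ m * ((Nat.factorial m : R) * (Nat.factorial m : R)) := by
    have hRN := congrArg (Nat.cast : ℕ → ZMod (p ^ 2)) hN
    push_cast at hRN
    have e1 : ((Nat.factorial m * Nat.factorial m * (m + 1) : ℕ) : R)
          * (((p + m).choose p * catalan m : ℕ) : R)
        = ((Nat.factorial m : R) * (((p + m).choose m : ℕ) : R))
          * ((Nat.factorial m : R) * (((p - 1).choose m : ℕ) : R)) := by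
      push_cast
      linear_combination (Nat.factorial m : R) * (Nat.factorial m : R) * hRN
    rw [e1, hAex, hBex]
    have hps := p_sq_zero p
    linear_combination (-(1 : R)) * (-1 : R) ^ m * E ^ 2 * hps
  have hfin : ((Nat.factorial m * Nat.factorial m * (m + 1) : ℕ) : R)
        * ((-1 : R) ^ m * (2 - 2 * (p : R)))
      = (-1 : R) ^ m * ((Nat.factorial m : R) * (Nat.factorial m : R)) := by
    have h2m : ((m + 1 : ℕ) : R) * 2 = (p : R) + 1 := by
      have h8 : ((2 * m + 2 : ℕ) : R) = ((p + 1 : ℕ) : R) := by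
        rw [show 2 * m + 2 = p + 1 from by omega]
      push_cast at h8 ⊢
      linear_combination h8
    have hps := p_sq_zero p
    push_cast at h2m ⊢
    linear_combination (Nat.factorial m : R) * (Nat.factorial m : R) * (-1 : R) ^ m
      * ((1 - (p : R)) * h2m - hps)
  have hdvd : ¬ p ∣ Nat.factorial m * Nat.factorial m * (m + 1) := by
    intro hdvd
    rcases (Nat.Prime.dvd_mul hpf.out).mp hdvd with h1 | h2
    · rcases (Nat.Prime.dvd_mul hpf.out).mp h1 with h3 | h3 <;>
        · rw [Nat.Prime.dvd_factorial hpf.out] at h3; omega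
    · exact absurd (Nat.le_of_dvd (by omega) h2) (by omega)
  exact cancel_unit p hdvd (hcomb.trans hfin.symm)


lemma phi_neg_one_pow (n : ℕ) : phi p ((-1 : F) ^ n) = (-1 : R) ^ n * (p : R) := by
  have h1 : phi p (1 : F) = (p : R) := by
    have h2 := phi_natCast p 1
    simpa using h2
  rcases Nat.even_or_odd n with he | hodd
  · rw [he.neg_one_pow, he.neg_one_pow, h1, one_mul]
  · rw [hodd.neg_one_pow, hodd.neg_one_pow, map_neg, h1]
    ring

lemma LAlt (hp3 : 3 ≤ p) :
    ∑ j ∈ Finset.range (p - 1), ((p.choose (j + 1) : ℕ) : R)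
      = phi p (∑ j ∈ Finset.range (p - 1), (-1 : F) ^ j * ((j + 1 : ℕ) : F)⁻¹) := by
  rw [map_sum]
  refine Finset.sum_congr rfl fun j hj => ?_
  simp only [Finset.mem_range] at hj
  have hdv : ¬ p ∣ (j + 1) := fun hdvd => absurd (Nat.le_of_dvd (by omega) hdvd) (by omega)
  have hne : ((j + 1 : ℕ) : F) ≠ 0 := Fne p (by omega) (by omega)
  have h1 : ((j + 1 : ℕ) : R) * ((p.choose (j + 1) : ℕ) : R) = phi p ((-1 : F) ^ j) := by
    have hRN := congrArg (Nat.cast : ℕ → ZMod (p ^ 2)) (N3 p j (by omega))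
    push_cast at hRN
    have h2 : ((j + 1 : ℕ) : R) * ((p.choose (j + 1) : ℕ) : R)
        = (p : R) * (((p - 1).choose j : ℕ) : R) := by push_cast; linear_combination hRN
    rw [h2, pmul_eq_phi]
    congr 1
    rw [map_natCast]
    exact F3 p (by omega)
  have h3 : ((j + 1 : ℕ) : R) * phi p ((-1 : F) ^ j * ((j + 1 : ℕ) : F)⁻¹)
      = phi p ((-1 : F) ^ j) := by
    rw [phi_nat_mul]
    congr 1
    rw [mul_comm ((-1 : F) ^ j) _, ← mul_assoc, mul_inv_cancel₀ hne, one_mul]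
  exact cancel_unit p hdv (h1.trans h3.symm)

lemma hchoosesum (hp3 : 3 ≤ p) :
    ∑ j ∈ Finset.range (p - 1), p.choose (j + 1) + 2 = 2 ^ p := by
  have h1 := Nat.sum_range_choose p
  rw [Finset.sum_range_succ'] at h1
  have h2 := Finset.sum_range_succ (fun i => p.choose (i + 1)) (p - 1)
  rw [show p - 1 + 1 = p from by omega] at h2
  rw [h2, Nat.choose_self, Nat.choose_zero_right] at h1
  omega

lemma main (ho : Odd p) (hp3 : 3 ≤ p) :
    ((∑ k ∈ Finset.Icc 1 (p - 1), schroeder k : ℕ) : R)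
      = 2 * (-1 : R) ^ ((p - 1) / 2) - 2 ^ p := by
  have hN1 := congrArg (Nat.cast : ℕ → ZMod (p ^ 2)) (N1 p (by omega))
  push_cast at hN1
  set m := (p - 1) / 2 with hm
  have hmem : m ∈ Finset.range (p - 1) := Finset.mem_range.mpr (by
    obtain ⟨d, hd⟩ := ho; omega)
  have e0 : ∑ j ∈ Finset.range p, (((p + j).choose (2 * j + 1) : ℕ) : R) * ((catalan j : ℕ) : R)
      = (((p + (p - 1)).choose (2 * (p - 1) + 1) : ℕ) : R) * ((catalan (p - 1) : ℕ) : R)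
        + ((((p + m).choose (2 * m + 1) : ℕ)) : R) * ((catalan m : ℕ) : R)
        + ∑ j ∈ (Finset.range (p - 1)).erase m,
            (((p + j).choose (2 * j + 1) : ℕ) : R) * ((catalan j : ℕ) : R) := by
    have hr : Finset.range p = insert (p - 1) (Finset.range (p - 1)) := by
      have h9 := Finset.range_add_one (n := p - 1)
      rw [show p - 1 + 1 = p from by omega] at h9
      exact h9
    rw [hr, Finset.sum_insert (by simp), ← Finset.add_sum_erase _ _ hmem]
    ring
  have hT1 : (((p + (p - 1)).choose (2 * (p - 1) + 1) : ℕ) : R) * ((catalan (p - 1) : ℕ) : R)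
      = -1 - 2 * (p : R) := by
    rw [show 2 * (p - 1) + 1 = p + (p - 1) from by omega, Nat.choose_self, Nat.cast_one, one_mul,
      Lcat p ho hp3]
  have hT2 : (((p + m).choose (2 * m + 1) : ℕ) : R) * ((catalan m : ℕ) : R)
      = (-1 : R) ^ m * (2 - 2 * (p : R)) := by
    rw [show 2 * m + 1 = p from by obtain ⟨d, hd⟩ := ho; omega]
    have h9 := Lt p ho hp3
    push_cast at h9 ⊢
    linear_combination h9
  have hT3 : ∑ j ∈ (Finset.range (p - 1)).erase m,
        (((p + j).choose (2 * j + 1) : ℕ) : R) * ((catalan j : ℕ) : R)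
      = 2 * (p : R) - ((2 : R) ^ p - 2) + 2 * (p : R) * (-1 : R) ^ m := by
    have hstep : ∀ j ∈ (Finset.range (p - 1)).erase m,
        (((p + j).choose (2 * j + 1) : ℕ) : R) * ((catalan j : ℕ) : R)
          = phi p ((-1 : F) ^ j * (((j + 1) * (2 * j + 1) : ℕ) : F)⁻¹) := by
      intro j hj
      simp only [Finset.mem_erase, Finset.mem_range] at hj
      have h9 := Lord p ho hp3 hj.2 hj.1
      rw [Nat.cast_mul] at h9
      exact h9
    rw [Finset.sum_congr rfl hstep, ← map_sum, LJ p ho hp3, map_add, map_sub]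
    have hphi2 : phi p (2 : F) = (p : R) * 2 := by
      have h9 := phi_natCast p 2
      push_cast at h9
      exact h9
    have hphim : phi p (2 * (-1 : F) ^ m) = 2 * (p : R) * (-1 : R) ^ m := by
      rw [two_mul, map_add, phi_neg_one_pow]
      ring
    have hAltv : phi p (∑ j ∈ Finset.range (p - 1), (-1 : F) ^ j * ((j + 1 : ℕ) : F)⁻¹)
        = (2 : R) ^ p - 2 := by
      rw [← LAlt p hp3]
      have h10 := congrArg (Nat.cast : ℕ → ZMod (p ^ 2)) (hchoosesum p hp3)
      push_cast at h10
      linear_combination h10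
    rw [hphi2, hphim, hAltv]
    ring
  rw [e0, hT1, hT2, hT3] at hN1
  push_cast
  linear_combination hN1

end Sun22

theorem sun_2_2 (p : ℕ) [Fact p.Prime] (hp : Odd p) :
    ∑ k ∈ Finset.Icc 1 (p - 1), (schroeder k : ℤ) ≡
      2 * legendreSym p (-1) - 2 ^ p [ZMOD (p : ℤ) ^ 2] := by
  have hp2 : p ≠ 2 := by rintro rfl; exact (by decide : ¬ Odd 2) hp
  have hp3 : 3 ≤ p := by
    have h1 := (‹Fact p.Prime›.out).two_le
    obtain ⟨d, hd⟩ := id hp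
    omega
  have hleg : legendreSym p (-1) = (-1 : ℤ) ^ ((p - 1) / 2) := by
    rw [legendreSym.at_neg_one hp2, ZMod.χ₄_eq_neg_one_pow (show p % 2 = 1 from by
      obtain ⟨d, hd⟩ := id hp; omega)]
    congr 1
    obtain ⟨d, hd⟩ := id hp
    omega
  have hmain := Sun22.main p hp hp3
  have hZ : (((∑ k ∈ Finset.Icc 1 (p - 1), (schroeder k : ℤ) : ℤ)) : ZMod (p ^ 2))
      = (((2 * legendreSym p (-1) - 2 ^ p : ℤ) : ℤ) : ZMod (p ^ 2)) := by
    rw [hleg]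
    push_cast
    push_cast at hmain
    linear_combination hmain
  have h2 := (ZMod.intCast_eq_intCast_iff _ _ _).mp hZ
  rwa [show ((p ^ 2 : ℕ) : ℤ) = (p : ℤ) ^ 2 from by push_cast; ring] at h2
end
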